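/- arXiv:2101.00207 — 2 statements merged into one kernel-verified Lean document; each statement's English description precedes it below -/
import Mathlib

section
/- Let E be a Dedekind complete Riesz space with weak order unit e, and let (f_n) be an order bounded sequence in E₊. Then (1/n)·∑_{k=0}^{n-1} f_k → 0 in order if and only if there exists a density zero sequence (p_n) of components of e such that (e - p_n)·f_n → 0 in order (where multiplication by the component e - p_n is the corresponding band projection applied to f_n). -/
open Finset

section Defs

variable {E : Type*} [ConditionallyCompleteLattice E] [AddCommGroup E] [Module ℝ E]
  [CovariantClass E E (· + ·) (· ≤ ·)]

/-- Order convergence of a sequence: there is a sequence `u ↓ 0` dominating the tails. -/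
def OrderConvergesTo (f : ℕ → E) (x : E) : Prop :=
  ∃ u : ℕ → E, Antitone u ∧ IsGLB (Set.range u) (0 : E) ∧
    ∀ m : ℕ, ∃ N : ℕ, ∀ n ≥ N, |f n - x| ≤ u m

/-- `p` is a component of `e`. -/
def IsComponent (e p : E) : Prop := 0 ≤ p ∧ p ≤ e ∧ p ⊓ (e - p) = 0

/-- A sequence of components is of density zero if its Cesàro means order converge to `0`. -/
def DensityZero (p : ℕ → E) : Prop :=
  OrderConvergesTo (fun n => (n : ℝ)⁻¹ • ∑ k ∈ Finset.range n, p k) (0 : E)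

/-- The band projection (onto the band generated by `p`) applied to a positive element `f`. -/
noncomputable def bandProj (p f : E) : E :=
  sSup (Set.range fun n : ℕ => f ⊓ (n : ℝ) • p)

end Defs

section Systems

variable (E : Type*) [ConditionallyCompleteLattice E] [AddCommGroup E] [Module ℝ E]
  [CovariantClass E E (· + ·) (· ≤ ·)]

/-- The data of a conditional expectation preserving system, without the
intertwining identity `T S = T`: a Dedekind complete Riesz space with weak order unit `e`,
the `f`-algebra multiplication of `E_e` (with unit `e`), a strictly-positive-free
conditional expectation operator `T` with `T e = e`, and a Riesz homomorphism `S`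
with `S e = e`. -/
structure PreCEPS where
  e : E
  e_pos : 0 < e
  weakUnit : ∀ x : E, e ⊓ |x| = 0 → x = 0
  /-- the `f`-algebra multiplication (of the ideal generated by `e`) -/
  mul : E →ₗ[ℝ] E →ₗ[ℝ] E
  mul_comm' : ∀ x y, mul x y = mul y x
  mul_pos' : ∀ x y, 0 ≤ x → 0 ≤ y → 0 ≤ mul x y
  one_mul' : ∀ x, mul e x = x
  finf' : ∀ x y z, x ⊓ y = 0 → 0 ≤ z → (mul x z) ⊓ y = 0
  /-- the conditional expectation operator -/
  T : E →ₗ[ℝ] E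
  T_pos : ∀ x, 0 ≤ x → 0 ≤ T x
  T_proj : ∀ x, T (T x) = T x
  T_e : T e = e
  T_oc : ∀ (s : Set E) (x : E), s.Nonempty → DirectedOn (· ≤ ·) s → IsLUB s x →
    IsLUB (T '' s) (T x)
  T_range_closed : ∀ (s : Set E) (x : E), (∀ y ∈ s, T y = y) → IsLUB s x → T x = x
  /-- the Riesz homomorphism -/
  S : E →ₗ[ℝ] E
  S_sup : ∀ x y, S (x ⊔ y) = S x ⊔ S y
  S_e : S e = e

/-- A conditional expectation preserving system. -/
structure CEPS extends PreCEPS E where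
  TS : ∀ x, T (S x) = T x

variable {E}

/-- Strict positivity of the conditional expectation operator of a system. -/
def CEPS.StrictPos (A : CEPS E) : Prop := ∀ x : E, 0 ≤ x → A.T x = 0 → x = 0

/-- Ergodicity, characterised by Cesàro convergence of
`T((S^k p)·q)` to `Tp·Tq` for all components `p, q` of `e`. -/
def CEPS.Ergodic (A : CEPS E) : Prop :=
  ∀ p q : E, IsComponent A.e p → IsComponent A.e q →
    OrderConvergesTo
      (fun n => (n : ℝ)⁻¹ • ∑ k ∈ Finset.range n, A.T (A.mul ((A.S ^ k) p) q))
      (A.mul (A.T p) (A.T q))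

/-- Conditional weak mixing. -/
def CEPS.WeakMixing (A : CEPS E) : Prop :=
  ∀ p q : E, IsComponent A.e p → IsComponent A.e q →
    OrderConvergesTo
      (fun n => (n : ℝ)⁻¹ • ∑ k ∈ Finset.range n,
        |A.T (A.mul ((A.S ^ k) p) q) - A.mul (A.T p) (A.T q)|) (0 : E)

end Systems

section Tensor

variable {E F G : Type*}
  [ConditionallyCompleteLattice E] [AddCommGroup E] [Module ℝ E]
  [CovariantClass E E (· + ·) (· ≤ ·)]
  [ConditionallyCompleteLattice F] [AddCommGroup F] [Module ℝ F]
  [CovariantClass F F (· + ·) (· ≤ ·)]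
  [ConditionallyCompleteLattice G] [AddCommGroup G] [Module ℝ G]
  [CovariantClass G G (· + ·) (· ≤ ·)]

/-- A realisation of the Dedekind completion of the Fremlin tensor product of the
underlying spaces of two conditional expectation preserving systems, carrying the
pre-system structure (Grobler's tensor product conditional expectation and the tensor
product Riesz homomorphism), but without the intertwining identity for the product. -/
structure TensorPreCEPS (A : CEPS E) (B : CEPS F) (G : Type*)
    [ConditionallyCompleteLattice G] [AddCommGroup G] [Module ℝ G]
    [CovariantClass G G (· + ·) (· ≤ ·)] where
  sys : PreCEPS G
  tmul : E →ₗ[ℝ] F →ₗ[ℝ] G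
  tmul_pos : ∀ x y, 0 ≤ x → 0 ≤ y → 0 ≤ tmul x y
  e_def : sys.e = tmul A.e B.e
  T_tmul : ∀ x y, sys.T (tmul x y) = tmul (A.T x) (B.T y)
  S_tmul : ∀ x y, sys.S (tmul x y) = tmul (A.S x) (B.S y)
  mul_tmul : ∀ x y x' y',
    sys.mul (tmul x y) (tmul x' y') = tmul (A.mul x x') (B.mul y y')
  comp_dense : ∀ u : G, IsComponent sys.e u →
    IsLUB {w : G | ∃ p q, IsComponent A.e p ∧ IsComponent B.e q ∧
      tmul p q ≤ u ∧ w = tmul p q} u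
  tmul_oc_left : ∀ (x : ℕ → E) (a : E) (y : F), 0 ≤ y →
    OrderConvergesTo x a → OrderConvergesTo (fun n => tmul (x n) y) (tmul a y)
  tmul_oc_right : ∀ (x : E) (y : ℕ → F) (b : F), 0 ≤ x →
    OrderConvergesTo y b → OrderConvergesTo (fun n => tmul x (y n)) (tmul x b)

/-- As `TensorPreCEPS`, but where the tensor product system is a full conditional
expectation preserving system. -/
structure TensorCEPS (A : CEPS E) (B : CEPS F) (G : Type*)
    [ConditionallyCompleteLattice G] [AddCommGroup G] [Module ℝ G]
    [CovariantClass G G (· + ·) (· ≤ ·)] where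
  sys : CEPS G
  tmul : E →ₗ[ℝ] F →ₗ[ℝ] G
  tmul_pos : ∀ x y, 0 ≤ x → 0 ≤ y → 0 ≤ tmul x y
  e_def : sys.e = tmul A.e B.e
  T_tmul : ∀ x y, sys.T (tmul x y) = tmul (A.T x) (B.T y)
  S_tmul : ∀ x y, sys.S (tmul x y) = tmul (A.S x) (B.S y)
  mul_tmul : ∀ x y x' y',
    sys.mul (tmul x y) (tmul x' y') = tmul (A.mul x x') (B.mul y y')
  comp_dense : ∀ u : G, IsComponent sys.e u →
    IsLUB {w : G | ∃ p q, IsComponent A.e p ∧ IsComponent B.e q ∧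
      tmul p q ≤ u ∧ w = tmul p q} u
  tmul_oc_left : ∀ (x : ℕ → E) (a : E) (y : F), 0 ≤ y →
    OrderConvergesTo x a → OrderConvergesTo (fun n => tmul (x n) y) (tmul a y)
  tmul_oc_right : ∀ (x : E) (y : ℕ → F) (b : F), 0 ≤ x →
    OrderConvergesTo y b → OrderConvergesTo (fun n => tmul x (y n)) (tmul x b)

end Tensor

set_option linter.unusedSectionVars false
set_option linter.unusedVariables false
set_option linter.unnecessarySimpa false

namespace KVN
variable {E : Type*} [ConditionallyCompleteLattice E] [AddCommGroup E] [Module ℝ E]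
  [CovariantClass E E (· + ·) (· ≤ ·)]

lemma inf_shift (z w : E) : z ⊓ w = (z - w) ⊓ 0 + w := by
  rw [add_comm, add_inf, add_zero, add_sub_cancel, inf_comm]

/-- `a = a ⊓ b + (a - b)⁺` -/
lemma cut_decomp (a b : E) : a = a ⊓ b + ((a - b) ⊔ 0) := by
  have h : a ⊓ b = a - ((a - b) ⊔ 0) := by
    have h2 : a - ((a-b) ⊔ 0) = a + ((b-a) ⊓ 0) := by
      rw [sub_eq_add_neg, neg_sup, neg_zero, neg_sub]
    rw [h2, add_inf, add_zero, show a + (b - a) = b by abel, inf_comm]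
  rw [h]; abel

lemma inf_add_le {x y z : E} (hx : 0 ≤ x) (_hy : 0 ≤ y) (hz : 0 ≤ z) :
    z ⊓ (x + y) ≤ z ⊓ x + z ⊓ y := by
  have h2 : z ⊓ (x + y) ≤ z ⊓ x + y := by
    rw [inf_shift z (x+y), inf_shift z x]
    have h3 : (z - (x+y)) ⊓ 0 ≤ (z - x) ⊓ 0 :=
      inf_le_inf_right 0 (by
        have := add_le_add_right _hy x
        rw [add_zero] at this
        exact sub_le_sub_left this z)
    calc (z - (x+y)) ⊓ 0 + (x+y) = ((z - (x+y)) ⊓ 0 + x) + y := by abel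
    _ ≤ ((z - x) ⊓ 0 + x) + y := by
        exact add_le_add_left (add_le_add_left h3 x) y
  have h3 : z ⊓ (x + y) ≤ z ⊓ x + z := by
    calc z ⊓ (x+y) ≤ z := inf_le_left
    _ = 0 + z := by abel
    _ ≤ z ⊓ x + z := add_le_add_left (le_inf hz hx) z
  have h4 : z ⊓ x + z ⊓ y = (z ⊓ x + z) ⊓ (z ⊓ x + y) := add_inf z y (z ⊓ x)
  rw [h4]; exact le_inf h3 h2

lemma nsmul_nonneg' {a : E} (ha : 0 ≤ a) (n : ℕ) : 0 ≤ n • a := by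
  induction n with
  | zero => simp
  | succ k ih => rw [succ_nsmul]; exact add_nonneg ih ha

lemma nsmul_le_nsmul' {a b : E} (h : a ≤ b) (n : ℕ) : n • a ≤ n • b := by
  induction n with
  | zero => simp
  | succ k ih => rw [succ_nsmul, succ_nsmul]; exact add_le_add ih h

lemma nsmul_mono_nat {a : E} (ha : 0 ≤ a) {m n : ℕ} (h : m ≤ n) : m • a ≤ n • a := by
  obtain ⟨k, rfl⟩ := Nat.exists_eq_add_of_le h
  rw [add_nsmul]
  calc m • a = m • a + 0 := by abel
  _ ≤ m • a + k • a := add_le_add_right (nsmul_nonneg' ha k) _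

lemma le_nsmul_self' {a : E} (ha : 0 ≤ a) {n : ℕ} (hn : 1 ≤ n) : a ≤ n • a := by
  simpa using nsmul_mono_nat ha hn

lemma sum_nonneg' {ι : Type*} (s : Finset ι) (x : ι → E) (hx : ∀ i ∈ s, 0 ≤ x i) :
    0 ≤ ∑ i ∈ s, x i := by
  classical
  induction s using Finset.induction with
  | empty => simp
  | insert a s' hns ih =>
    rw [Finset.sum_insert hns]
    exact add_nonneg (hx a (Finset.mem_insert_self a s'))
      (ih fun i hi => hx i (Finset.mem_insert_of_mem hi))

lemma sum_le_sum' {ι : Type*} (s : Finset ι) (x y : ι → E) (h : ∀ i ∈ s, x i ≤ y i) :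
    ∑ i ∈ s, x i ≤ ∑ i ∈ s, y i := by
  classical
  induction s using Finset.induction with
  | empty => simp
  | insert a s' hns ih =>
    rw [Finset.sum_insert hns, Finset.sum_insert hns]
    exact add_le_add (h a (Finset.mem_insert_self a s'))
      (ih fun i hi => h i (Finset.mem_insert_of_mem hi))

lemma sum_le_sum_subset' {ι : Type*} {s t : Finset ι} (hst : s ⊆ t) (x : ι → E)
    (hx : ∀ i ∈ t, 0 ≤ x i) : ∑ i ∈ s, x i ≤ ∑ i ∈ t, x i := by
  classical
  rw [← Finset.sum_sdiff hst]
  calc ∑ i ∈ s, x i = 0 + ∑ i ∈ s, x i := by abel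
  _ ≤ ∑ i ∈ t \ s, x i + ∑ i ∈ s, x i :=
      add_le_add_left (sum_nonneg' _ _ fun i hi => hx i (Finset.mem_sdiff.mp hi).1) _

lemma inf_sum_le {ι : Type*} (s : Finset ι) (x : ι → E) (z : E)
    (hx : ∀ i ∈ s, 0 ≤ x i) (hz : 0 ≤ z) : z ⊓ (∑ i ∈ s, x i) ≤ ∑ i ∈ s, z ⊓ x i := by
  classical
  induction s using Finset.induction with
  | empty => simp
  | insert a s' hns ih =>
    rw [Finset.sum_insert hns, Finset.sum_insert hns]
    have hs : (0:E) ≤ ∑ i ∈ s', x i :=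
      sum_nonneg' _ _ fun i hi => hx i (Finset.mem_insert_of_mem hi)
    calc z ⊓ (x a + ∑ i ∈ s', x i) ≤ z ⊓ x a + z ⊓ (∑ i ∈ s', x i) :=
          inf_add_le (hx a (Finset.mem_insert_self a s')) hs hz
    _ ≤ z ⊓ x a + ∑ i ∈ s', z ⊓ x i :=
          add_le_add_right (ih fun i hi => hx i (Finset.mem_insert_of_mem hi)) _

lemma disjoint_nsmul {a b : E} (ha : 0 ≤ a) (hb : 0 ≤ b) (h : a ⊓ b = 0) (n : ℕ) :
    a ⊓ (n • b) = 0 := by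
  induction n with
  | zero => simp [le_antisymm (by simpa using inf_le_right) (le_inf ha le_rfl), ha]
  | succ k ih =>
    rw [succ_nsmul]
    refine le_antisymm ?_ (le_inf ha (add_nonneg (nsmul_nonneg' hb k) hb))
    calc a ⊓ (k • b + b) ≤ a ⊓ (k • b) + a ⊓ b := inf_add_le (nsmul_nonneg' hb k) hb ha
    _ = 0 := by rw [ih, h, add_zero]

lemma disjoint_nsmul₂ {a b : E} (ha : 0 ≤ a) (hb : 0 ≤ b) (h : a ⊓ b = 0) (n m : ℕ) :
    (m • a) ⊓ (n • b) = 0 := by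
  rw [inf_comm]
  exact disjoint_nsmul (nsmul_nonneg' hb n) ha
    (by rw [inf_comm]; exact disjoint_nsmul ha hb h n) m

lemma disjoint_of_le {a b a' b' : E} (ha' : 0 ≤ a') (hb' : 0 ≤ b')
    (ha : a' ≤ a) (hb : b' ≤ b) (h : a ⊓ b = 0) : a' ⊓ b' = 0 :=
  le_antisymm (h ▸ inf_le_inf ha hb) (le_inf ha' hb')

lemma add_eq_sup_of_disjoint {a b : E} (h : a ⊓ b = 0) : a + b = a ⊔ b := by
  have := inf_add_sup a b
  rw [h, zero_add] at this
  exact this.symm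

/-- if `a = b - c` with `b, c ≥ 0` disjoint then `b = a ⊔ 0`. -/
lemma posPart_unique {a b c : E} (hb : 0 ≤ b) (hc : 0 ≤ c) (hd : b ⊓ c = 0)
    (h : a = b - c) : a ⊔ 0 = b := by
  have h1 : b ⊔ c - c = (b - c) ⊔ (c - c) := by
    rw [sub_eq_add_neg, add_comm, add_sup]
    congr 1 <;> abel
  have h2 : a ⊔ 0 = b ⊔ c - c := by
    rw [h, h1, show c - c = (0:E) by abel]
  rw [h2, ← add_eq_sup_of_disjoint hd]; abel

lemma nsmul_posPart (a : E) (n : ℕ) : n • (a ⊔ 0) = (n • a) ⊔ 0 := by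
  have hp : 0 ≤ a ⊔ 0 := le_sup_right
  have hm : 0 ≤ (-a) ⊔ 0 := le_sup_right
  have hd : (a ⊔ 0) ⊓ ((-a) ⊔ 0) = 0 := posPart_inf_negPart_eq_zero a
  have key : n • a = n • (a ⊔ 0) - n • ((-a) ⊔ 0) := by
    rw [← smul_sub]
    have hneg : -((-a) ⊔ 0) = a ⊓ 0 := by rw [neg_sup, neg_neg, neg_zero]
    have : a ⊔ 0 - ((-a) ⊔ 0) = a := by
      rw [sub_eq_add_neg, hneg, add_comm]
      have := inf_add_sup a 0
      rw [add_zero] at this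
      exact this
    rw [this]
  exact (posPart_unique (nsmul_nonneg' hp n) (nsmul_nonneg' hm n)
    (disjoint_nsmul₂ hp hm hd n n) key).symm



lemma nsmul_cancel_le {a b : E} {n : ℕ} (hn : 0 < n) (h : n • a ≤ n • b) : a ≤ b := by
  have hc : n • (a - b) ≤ 0 := by
    rw [smul_sub, sub_nonpos]; exact h
  set c := a - b with hcdef
  have hdisj : (c ⊔ 0) ⊓ ((-c) ⊔ 0) = 0 := posPart_inf_negPart_eq_zero c
  have h1 : n • (c ⊔ 0) ≤ n • ((-c) ⊔ 0) := by
    have e1 : c ⊔ 0 = c + ((-c) ⊔ 0) := by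
      rw [add_sup, add_neg_cancel, add_zero, sup_comm]
    have e2 : n • (c ⊔ 0) = n • c + n • ((-c) ⊔ 0) := by rw [e1, smul_add]
    rw [e2]
    calc n • c + n • ((-c) ⊔ 0) ≤ 0 + n • ((-c) ⊔ 0) := add_le_add_left hc _
    _ = n • ((-c) ⊔ 0) := by abel
  have h2 : c ⊔ 0 ≤ n • (c ⊔ 0) := le_nsmul_self' le_sup_right hn
  have h3 : c ⊔ 0 ≤ (c ⊔ 0) ⊓ (n • ((-c) ⊔ 0)) := le_inf le_rfl (h2.trans h1)
  have h4 : (c ⊔ 0) ⊓ (n • ((-c) ⊔ 0)) = 0 := by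
    have := disjoint_nsmul₂ (le_sup_right : (0:E) ≤ c ⊔ 0) (le_sup_right : (0:E) ≤ (-c) ⊔ 0) hdisj n 1
    rw [one_smul] at this
    exact this
  rw [h4] at h3
  have : c ≤ 0 := le_trans le_sup_left h3
  rwa [hcdef, sub_nonpos] at this


/-- Archimedean property from Dedekind completeness. -/
lemma arch {x c : E} (h : ∀ n : ℕ, n • x ≤ c) : x ≤ 0 := by
  set S : Set E := Set.range (fun n : ℕ => n • x) with hS
  have hne : S.Nonempty := ⟨0 • x, ⟨0, rfl⟩⟩
  have hbdd : BddAbove S := ⟨c, by rintro y ⟨n, rfl⟩; exact h n⟩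
  have hkey : sSup S ≤ sSup S - x := by
    apply csSup_le hne
    rintro y ⟨n, rfl⟩
    have : (n+1) • x ≤ sSup S := le_csSup hbdd ⟨n+1, rfl⟩
    rw [succ_nsmul] at this
    exact le_sub_iff_add_le.mpr this
  have h2 : sSup S + x ≤ sSup S + 0 := by
    rw [add_zero]
    exact le_sub_iff_add_le.mp hkey
  exact le_of_add_le_add_left h2

lemma invSmul_cancel {n : ℕ} (hn : 0 < n) (x : E) : n • ((n:ℝ)⁻¹ • x) = x := by
  rw [← Nat.cast_smul_eq_nsmul ℝ n, smul_smul, mul_inv_cancel₀ (by positivity), one_smul]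

lemma invSmul_cancel' {n : ℕ} (hn : 0 < n) (x : E) : (n:ℝ)⁻¹ • (n • x) = x := by
  rw [← Nat.cast_smul_eq_nsmul ℝ n, smul_smul, inv_mul_cancel₀ (by positivity), one_smul]

lemma invSmul_mono {n : ℕ} (hn : 0 < n) {x y : E} (h : x ≤ y) :
    (n:ℝ)⁻¹ • x ≤ (n:ℝ)⁻¹ • y := by
  apply nsmul_cancel_le hn
  rw [invSmul_cancel hn, invSmul_cancel hn]
  exact h

lemma invSmul_nonneg {n : ℕ} (hn : 0 < n) {x : E} (h : 0 ≤ x) : 0 ≤ (n:ℝ)⁻¹ • x := by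
  have := invSmul_mono hn h
  rwa [smul_zero] at this

lemma invSmul_le_iff {n : ℕ} (hn : 0 < n) {x y : E} :
    (n:ℝ)⁻¹ • x ≤ y ↔ x ≤ n • y := by
  constructor
  · intro h
    have := nsmul_le_nsmul' h n
    rwa [invSmul_cancel hn] at this
  · intro h
    have := invSmul_mono hn h
    rwa [invSmul_cancel' hn] at this

lemma le_invSmul_iff {n : ℕ} (hn : 0 < n) {x y : E} :
    x ≤ (n:ℝ)⁻¹ • y ↔ n • x ≤ y := by
  constructor
  · intro h
    have := nsmul_le_nsmul' h n
    rwa [invSmul_cancel hn] at this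
  · intro h
    have := invSmul_mono hn h
    rwa [invSmul_cancel' hn] at this

lemma invSmul_e_antitone {m n : ℕ} (hm : 0 < m) (hmn : m ≤ n) {e : E} (he : 0 ≤ e) :
    (n:ℝ)⁻¹ • e ≤ (m:ℝ)⁻¹ • e := by
  have hn : 0 < n := lt_of_lt_of_le hm hmn
  apply nsmul_cancel_le (Nat.mul_pos hm hn)
  rw [← smul_smul m n, invSmul_cancel hn, mul_comm, ← smul_smul n m, invSmul_cancel hm]
  exact nsmul_mono_nat he hmn

/-- `x ≤ (1/K)e` for all positive `K` implies `x ≤ 0`. -/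
lemma le_zero_of_le_invSmul {x e : E} (he : 0 ≤ e)
    (h : ∀ K : ℕ, 0 < K → x ≤ (K:ℝ)⁻¹ • e) : x ≤ 0 := by
  apply arch (c := e)
  intro n
  rcases Nat.eq_zero_or_pos n with rfl | hn
  · simpa using he
  · have := nsmul_le_nsmul' (h n hn) n
    rwa [invSmul_cancel hn] at this

/-- `x ≤ M • ((1/N) e)` for all large `N` implies `x ≤ 0`. -/
lemma le_zero_of_le_nsmul_invSmul {x e : E} (he : 0 ≤ e) (M N₀ : ℕ)
    (h : ∀ N ≥ N₀, 0 < N → x ≤ M • ((N:ℝ)⁻¹ • e)) : x ≤ 0 := by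
  apply arch (c := e)
  intro K
  set N : ℕ := max N₀ (K * M + 1) with hN
  have hNpos : 0 < N := lt_of_lt_of_le (Nat.succ_pos _) (le_max_right _ _)
  have hx := h N (le_max_left _ _) hNpos
  calc K • x ≤ K • (M • ((N:ℝ)⁻¹ • e)) := nsmul_le_nsmul' hx K
  _ = (K * M) • ((N:ℝ)⁻¹ • e) := smul_smul K M _
  _ ≤ N • ((N:ℝ)⁻¹ • e) := nsmul_mono_nat (invSmul_nonneg hNpos he)
      (le_trans (Nat.le_succ _) (le_max_right _ _))
  _ = e := invSmul_cancel hNpos e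

/-- distributivity of `⊓` over suprema. -/
lemma inf_csSup_le {S : Set E} (hne : S.Nonempty) (hbdd : BddAbove S) {a c : E}
    (h : ∀ x ∈ S, a ⊓ x ≤ c) : a ⊓ sSup S ≤ c := by
  set s := sSup S with hs
  have key : ∀ x ∈ S, x ≤ c + (s - a ⊓ s) := by
    intro x hx
    have hxs : x ≤ s := le_csSup hbdd hx
    have contr : a ⊓ s + x - s ≤ a ⊓ x := by
      have h1 : a ⊓ s + x - s = (a + x - s) ⊓ x := by
        rw [show a ⊓ s + x - s = (x - s) + (a ⊓ s) by abel, add_inf]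
        congr 1 <;> abel
      rw [h1]
      refine inf_le_inf_right x ?_
      calc a + x - s = a + (x - s) := by abel
      _ ≤ a + 0 := add_le_add_right (sub_nonpos.mpr hxs) a
      _ = a := add_zero a
    have h6 : a ⊓ s + x - s ≤ c := le_trans contr (h x hx)
    calc x = (a ⊓ s + x - s) + (s - a ⊓ s) := by abel
    _ ≤ c + (s - a ⊓ s) := add_le_add_left h6 _
  have h7 : s ≤ c + (s - a ⊓ s) := csSup_le hne key
  have h8 : a ⊓ s + s ≤ c + s := by
    calc a ⊓ s + s ≤ a ⊓ s + (c + (s - a ⊓ s)) := add_le_add_right h7 _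
    _ = c + s := by abel
  exact le_of_add_le_add_right h8

lemma add_csSup_le {u v : ℕ → E} {c : E} (hbu : BddAbove (Set.range u))
    (hbv : BddAbove (Set.range v)) (h : ∀ n m, u n + v m ≤ c) :
    sSup (Set.range u) + sSup (Set.range v) ≤ c := by
  have h1 : ∀ n, sSup (Set.range v) ≤ c - u n := by
    intro n
    apply csSup_le ⟨v 0, Set.mem_range_self 0⟩
    rintro y ⟨m, rfl⟩
    rw [le_sub_iff_add_le, add_comm]
    exact h n m
  have h2 : sSup (Set.range u) ≤ c - sSup (Set.range v) := by
    apply csSup_le ⟨u 0, Set.mem_range_self 0⟩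
    rintro y ⟨n, rfl⟩
    rw [le_sub_iff_add_le, add_comm]
    exact le_sub_iff_add_le.mp (h1 n)
  rw [← le_sub_iff_add_le]
  exact h2

/-! ### tail suprema and order convergence -/

noncomputable def tailSup (x : ℕ → E) (N : ℕ) : E := sSup (x '' Set.Ici N)

section TailSup

variable {x : ℕ → E} {B : E}

lemma tailSup_bddAbove (hb : ∀ n, x n ≤ B) (N : ℕ) : BddAbove (x '' Set.Ici N) :=
  ⟨B, by rintro y ⟨n, _, rfl⟩; exact hb n⟩

lemma le_tailSup (hb : ∀ n, x n ≤ B) {N n : ℕ} (h : N ≤ n) : x n ≤ tailSup x N :=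
  le_csSup (tailSup_bddAbove hb N) ⟨n, h, rfl⟩

lemma tailSup_le {N : ℕ} {c : E} (h : ∀ n, N ≤ n → x n ≤ c) : tailSup x N ≤ c :=
  csSup_le ⟨x N, ⟨N, Set.mem_Ici.mpr le_rfl, rfl⟩⟩ (by rintro y ⟨n, hn, rfl⟩; exact h n hn)

lemma tailSup_antitone (hb : ∀ n, x n ≤ B) : Antitone (tailSup x) := by
  intro M N h
  exact tailSup_le fun n hn => le_tailSup hb (le_trans h hn)

lemma tailSup_nonneg (hb : ∀ n, x n ≤ B) (h0 : ∀ n, 0 ≤ x n) (N : ℕ) :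
    0 ≤ tailSup x N := le_trans (h0 N) (le_tailSup hb le_rfl)

lemma tailSup_mono_seq {y : ℕ → E} {B' : E} (hb : ∀ n, y n ≤ B') (h : ∀ n, x n ≤ y n)
    (N : ℕ) : tailSup x N ≤ tailSup y N :=
  tailSup_le fun n hn => le_trans (h n) (le_tailSup hb hn)

end TailSup

/-- An antitone family whose only lower bounds are nonpositive. -/
def ZeroFam (v : ℕ → E) : Prop :=
  Antitone v ∧ ∀ c : E, (∀ m, c ≤ v m) → c ≤ 0

lemma ZeroFam.nonneg {v : ℕ → E} (hv : ZeroFam v) : True := trivial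

lemma zeroFam_add {u v : ℕ → E} (hu : ZeroFam u) (hv : ZeroFam v) :
    ZeroFam (fun m => u m + v m) := by
  refine ⟨fun a b hab => add_le_add (hu.1 hab) (hv.1 hab), ?_⟩
  intro c hc
  have key : ∀ k, c - v k ≤ 0 := by
    intro k
    apply hu.2
    intro m
    rcases le_total k m with h | h
    · calc c - v k ≤ c - v m := sub_le_sub_left (hv.1 h) c
      _ ≤ u m := sub_le_iff_le_add.mpr (by simpa using hc m)
    · calc c - v k ≤ u k := sub_le_iff_le_add.mpr (by simpa using hc k)
      _ ≤ u m := hu.1 h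

  apply hv.2
  intro k
  have := key k
  calc c = (c - v k) + v k := by abel
  _ ≤ 0 + v k := add_le_add_left (key k) _
  _ = v k := by abel

lemma zeroFam_nsmul {v : ℕ → E} (hv : ZeroFam v) (k : ℕ) :
    ZeroFam (fun m => k • v m) := by
  refine ⟨fun a b hab => nsmul_le_nsmul' (hv.1 hab) k, ?_⟩
  intro c hc
  rcases Nat.eq_zero_or_pos k with rfl | hk
  · simpa using hc 0
  · have h2 : (k:ℝ)⁻¹ • c ≤ 0 := hv.2 _ (fun m => by
      have h3 : c ≤ k • v m := hc m
      calc (k:ℝ)⁻¹ • c ≤ (k:ℝ)⁻¹ • (k • v m) := invSmul_mono hk h3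
      _ = v m := invSmul_cancel' hk (v m))
    have := nsmul_le_nsmul' h2 k
    rwa [invSmul_cancel hk, smul_zero] at this

lemma zeroFam_sum {ι : Type*} (s : Finset ι) (v : ι → ℕ → E)
    (hv : ∀ i ∈ s, ZeroFam (v i)) : ZeroFam (fun m => ∑ i ∈ s, v i m) := by
  classical
  induction s using Finset.induction with
  | empty => exact ⟨fun a b _ => by simp, fun c hc => by simpa using hc 0⟩
  | insert a s' hns ih =>
    have h1 : ZeroFam (fun m => v a m + ∑ i ∈ s', v i m) :=
      zeroFam_add (hv a (Finset.mem_insert_self a s'))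
        (ih fun i hi => hv i (Finset.mem_insert_of_mem hi))
    refine ⟨fun m n hmn => ?_, fun c hc => h1.2 c fun m => ?_⟩
    · simp only [Finset.sum_insert hns]
      exact h1.1 hmn
    · have h4 : c ≤ ∑ i ∈ insert a s', v i m := hc m
      rwa [Finset.sum_insert hns] at h4

/-- From `c ≤ y + v m` for all `m`, with `ZeroFam v`, conclude `c ≤ y`. -/
lemma le_of_le_add_zeroFam {c y : E} {v : ℕ → E} (hv : ZeroFam v)
    (h : ∀ m, c ≤ y + v m) : c ≤ y := by
  have : c - y ≤ 0 := hv.2 _ fun m => sub_le_iff_le_add.mpr (by rw [add_comm]; exact h m)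
  calc c = (c - y) + y := by abel
  _ ≤ 0 + y := add_le_add_left this y
  _ = y := by abel

/-- `NullSeq x`: every common lower bound of the tail suprema is nonpositive. -/
def NullSeq (x : ℕ → E) : Prop := ∀ c : E, (∀ N, c ≤ tailSup x N) → c ≤ 0

lemma nullSeq_zeroFam {x : ℕ → E} {B : E} (hb : ∀ n, x n ≤ B) (hn : NullSeq x) :
    ZeroFam (tailSup x) := ⟨tailSup_antitone hb, hn⟩

lemma orderConv_of_nullSeq {x : ℕ → E} {B : E} (h0 : ∀ n, 0 ≤ x n) (hb : ∀ n, x n ≤ B)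
    (hn : NullSeq x) : OrderConvergesTo x 0 := by
  refine ⟨tailSup x, tailSup_antitone hb, ⟨?_, ?_⟩, ?_⟩
  · rintro y ⟨N, rfl⟩
    exact tailSup_nonneg hb h0 N
  · intro c hc
    exact hn c fun N => hc ⟨N, rfl⟩
  · intro m
    exact ⟨m, fun n hn' => by
      rw [sub_zero, abs_of_nonneg (h0 n)]
      exact le_tailSup hb hn'⟩

lemma nullSeq_of_orderConv {x : ℕ → E} {B : E} (h0 : ∀ n, 0 ≤ x n) (hb : ∀ n, x n ≤ B)
    (hc : OrderConvergesTo x 0) : NullSeq x := by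
  obtain ⟨u, hu_anti, hu_glb, hu_tail⟩ := hc
  intro c hcle
  have key : ∀ m, c ≤ u m := by
    intro m
    obtain ⟨N, hN⟩ := hu_tail m
    calc c ≤ tailSup x N := hcle N
    _ ≤ u m := tailSup_le fun n hn => by
        have := hN n hn
        rwa [sub_zero, abs_of_nonneg (h0 n)] at this
  exact hu_glb.2 (by rintro y ⟨m, rfl⟩; exact key m)

/-! ### band projections -/

lemma bandProj_def (p f : E) :
    bandProj p f = sSup (Set.range fun n : ℕ => f ⊓ n • p) := by
  have h : (fun n : ℕ => f ⊓ (n:ℝ) • p) = (fun n : ℕ => f ⊓ n • p) := by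
    funext n; rw [Nat.cast_smul_eq_nsmul]
  unfold bandProj
  rw [h]

lemma bandProj_bddAbove (p f : E) : BddAbove (Set.range fun n : ℕ => f ⊓ n • p) :=
  ⟨f, by rintro y ⟨n, rfl⟩; exact inf_le_left⟩

lemma bandProj_le (p f : E) : bandProj p f ≤ f := by
  rw [bandProj_def]
  exact csSup_le (Set.range_nonempty _) (by rintro y ⟨n, rfl⟩; exact inf_le_left)

lemma le_bandProj (p f : E) (n : ℕ) : f ⊓ n • p ≤ bandProj p f := by
  rw [bandProj_def]
  exact le_csSup (bandProj_bddAbove p f) ⟨n, rfl⟩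

lemma bandProj_nonneg {f : E} (p : E) (hf : 0 ≤ f) : 0 ≤ bandProj p f := by
  have := le_bandProj p f 0
  rw [zero_smul] at this
  calc (0:E) = f ⊓ 0 := (inf_eq_right.mpr hf).symm
  _ ≤ bandProj p f := this

lemma bandProj_mono_f {f g : E} (p : E) (h : f ≤ g) : bandProj p f ≤ bandProj p g := by
  rw [bandProj_def, bandProj_def]
  apply csSup_le (Set.range_nonempty _)
  rintro y ⟨n, rfl⟩
  exact le_trans (inf_le_inf_right _ h) (le_csSup (bandProj_bddAbove p g) ⟨n, rfl⟩)

lemma bandProj_mono_p {p q : E} (f : E) (h : p ≤ q) : bandProj p f ≤ bandProj q f := by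
  rw [bandProj_def, bandProj_def]
  apply csSup_le (Set.range_nonempty _)
  rintro y ⟨n, rfl⟩
  exact le_trans (inf_le_inf_left _ (nsmul_le_nsmul' h n))
    (le_csSup (bandProj_bddAbove q f) ⟨n, rfl⟩)

lemma bandProj_zero (p : E) : bandProj p 0 = 0 := by
  apply le_antisymm (bandProj_le p 0)
  have := le_bandProj p 0 0
  rwa [zero_smul, inf_idem] at this

lemma bandProj_disjoint_zero {p f : E} (hf : 0 ≤ f) (hp : 0 ≤ p) (h : f ⊓ p = 0) :
    bandProj p f = 0 := by
  apply le_antisymm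
  · rw [bandProj_def]
    apply csSup_le (Set.range_nonempty _)
    rintro y ⟨n, rfl⟩
    show f ⊓ n • p ≤ 0
    rw [disjoint_nsmul hf hp h n]
  · exact bandProj_nonneg p hf

lemma bandProj_subadd {p f g : E} (hf : 0 ≤ f) (hg : 0 ≤ g) (hp : 0 ≤ p) :
    bandProj p (f + g) ≤ bandProj p f + bandProj p g := by
  rw [bandProj_def p (f+g)]
  apply csSup_le (Set.range_nonempty _)
  rintro y ⟨n, rfl⟩
  have h1 : (f + g) ⊓ (n • p) ≤ f ⊓ (n • p) + g ⊓ (n • p) := by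
    rw [inf_comm (f+g), inf_comm f, inf_comm g]
    exact inf_add_le hf hg (nsmul_nonneg' hp n)
  exact le_trans h1 (add_le_add (le_bandProj p f n) (le_bandProj p g n))

lemma bandProj_sum_le {ι : Type*} (s : Finset ι) (x : ι → E) (p : E)
    (hx : ∀ i ∈ s, 0 ≤ x i) (hp : 0 ≤ p) :
    bandProj p (∑ i ∈ s, x i) ≤ ∑ i ∈ s, bandProj p (x i) := by
  classical
  induction s using Finset.induction with
  | empty => simp [bandProj_zero]
  | insert a s' hns ih =>
    rw [Finset.sum_insert hns, Finset.sum_insert hns]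
    calc bandProj p (x a + ∑ i ∈ s', x i)
        ≤ bandProj p (x a) + bandProj p (∑ i ∈ s', x i) :=
          bandProj_subadd (hx a (Finset.mem_insert_self a s'))
            (sum_nonneg' _ _ fun i hi => hx i (Finset.mem_insert_of_mem hi)) hp
    _ ≤ bandProj p (x a) + ∑ i ∈ s', bandProj p (x i) :=
          add_le_add_right (ih fun i hi => hx i (Finset.mem_insert_of_mem hi)) _

lemma bandProj_superadd (p f g : E) :
    bandProj p f + bandProj p g ≤ bandProj p (f + g) := by
  rw [bandProj_def p f, bandProj_def p g]
  apply add_csSup_le (bandProj_bddAbove p f) (bandProj_bddAbove p g)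
  intro n m
  have h1 : f ⊓ n • p + g ⊓ m • p ≤ (f + g) ⊓ ((n + m) • p) := by
    apply le_inf
    · exact add_le_add inf_le_left inf_le_left
    · rw [add_nsmul]
      exact add_le_add inf_le_right inf_le_right
  exact le_trans h1 (le_bandProj p (f+g) (n+m))

lemma le_bandProj_sum {ι : Type*} (s : Finset ι) (x : ι → E) (p : E) :
    ∑ i ∈ s, bandProj p (x i) ≤ bandProj p (∑ i ∈ s, x i) := by
  classical
  induction s using Finset.induction with
  | empty => simp [bandProj_zero]
  | insert a s' hns ih =>
    rw [Finset.sum_insert hns, Finset.sum_insert hns]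
    calc bandProj p (x a) + ∑ i ∈ s', bandProj p (x i)
        ≤ bandProj p (x a) + bandProj p (∑ i ∈ s', x i) := add_le_add_right ih _
    _ ≤ bandProj p (x a + ∑ i ∈ s', x i) := bandProj_superadd _ _ _

lemma nsmul_bandProj_le (p f : E) (k : ℕ) :
    k • bandProj p f ≤ bandProj p (k • f) := by
  induction k with
  | zero =>
    rw [zero_smul, zero_smul, bandProj_zero]
  | succ j ih =>
    rw [succ_nsmul, succ_nsmul]
    calc j • bandProj p f + bandProj p f ≤ bandProj p (j • f) + bandProj p f :=
          add_le_add_left ih _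
    _ ≤ bandProj p (j • f + f) := bandProj_superadd _ _ _

/-- for a component `c` of `e`: `bandProj c (k•e) ≤ k•c`. -/
lemma bandProj_nsmul_e_le {e c : E} (hc : IsComponent e c) (k : ℕ) :
    bandProj c (k • e) ≤ k • c := by
  obtain ⟨hc0, hce, hcd⟩ := hc
  have he0 : 0 ≤ e := le_trans hc0 hce
  rw [bandProj_def]
  apply csSup_le (Set.range_nonempty _)
  rintro y ⟨j, rfl⟩
  have hec : 0 ≤ e - c := sub_nonneg.mpr hce
  have hdecomp : k • e = k • c + k • (e - c) := by rw [← smul_add]; congr 1; abel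
  have h1 : (k • e) ⊓ (j • c) ≤ (j • c) ⊓ (k • c) + (j • c) ⊓ (k • (e - c)) := by
    rw [hdecomp, inf_comm]
    exact inf_add_le (nsmul_nonneg' hc0 k) (nsmul_nonneg' hec k) (nsmul_nonneg' hc0 j)
  have h2 : (j • c) ⊓ (k • (e - c)) = 0 :=
    disjoint_nsmul₂ hc0 hec hcd k j
  calc (k • e) ⊓ (j • c) ≤ (j • c) ⊓ (k • c) + (j • c) ⊓ (k • (e - c)) := h1
  _ = (j • c) ⊓ (k • c) := by rw [h2, add_zero]
  _ ≤ k • c := inf_le_right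

lemma bandProj_sup_le {c d f : E} (hf : 0 ≤ f) (hc : 0 ≤ c) (hd : 0 ≤ d) :
    bandProj (c ⊔ d) f ≤ bandProj c f + bandProj d f := by
  rw [bandProj_def (c ⊔ d) f]
  apply csSup_le (Set.range_nonempty _)
  rintro y ⟨n, rfl⟩
  have h1 : n • (c ⊔ d) ≤ n • c + n • d := by
    have : c ⊔ d ≤ c + d := sup_le (le_add_of_nonneg_right hd) (le_add_of_nonneg_left hc)
    calc n • (c ⊔ d) ≤ n • (c + d) := nsmul_le_nsmul' this n
    _ = n • c + n • d := smul_add n c d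
  have h2 : f ⊓ n • (c ⊔ d) ≤ f ⊓ (n • c + n • d) := inf_le_inf_left f h1
  have h3 : f ⊓ (n • c + n • d) ≤ f ⊓ (n • c) + f ⊓ (n • d) :=
    inf_add_le (nsmul_nonneg' hc n) (nsmul_nonneg' hd n) hf
  exact le_trans (le_trans h2 h3) (add_le_add (le_bandProj c f n) (le_bandProj d f n))

/-- telescoping sum: `∑_{m<n} ((f - m•e)⁺ ⊓ e) ≤ f` for `f, e ≥ 0`. -/
lemma telescope_le {f e : E} (hf : 0 ≤ f) (he : 0 ≤ e) (n : ℕ) :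
    ∑ m ∈ Finset.range n, (((f - m • e) ⊔ 0) ⊓ e) ≤ f := by
  have step : ∀ m : ℕ, ((f - m • e) ⊔ 0) ⊓ e ≤ f ⊓ ((m+1) • e) - f ⊓ (m • e) := by
    intro m
    set z := f - m • e with hz
    have h1 : ((z ⊔ 0) ⊓ e) ≤ z ⊓ e + ((-z) ⊔ 0) := by
      have e1 : z ⊓ e + ((-z) ⊔ 0) = (z + ((-z) ⊔ 0)) ⊓ (e + ((-z) ⊔ 0)) := by
        rw [add_comm, add_inf, add_comm ((-z) ⊔ 0) z, add_comm ((-z) ⊔ 0) e]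
      have e2 : z + ((-z) ⊔ 0) = z ⊔ 0 := by
        rw [add_sup, add_neg_cancel, add_zero, sup_comm]
      rw [e1, e2]
      apply le_inf
      · exact inf_le_left
      · calc (z ⊔ 0) ⊓ e ≤ e := inf_le_right
        _ ≤ e + ((-z) ⊔ 0) := le_add_of_nonneg_right le_sup_right
    have h2 : f ⊓ ((m+1) • e) - m • e = z ⊓ e := by
      rw [sub_eq_add_neg, add_comm, add_inf, hz]
      congr 1
      · abel
      · rw [succ_nsmul]; abel
    have h3 : (-z) ⊔ 0 = m • e - f ⊓ (m • e) := by
      have h5 := cut_decomp (m • e) f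
      have h4 : m • e - (m • e) ⊓ f = (m • e - f) ⊔ 0 := 
        sub_eq_iff_eq_add.mpr (by rw [add_comm]; exact h5)
      rw [show -z = m • e - f by rw [hz]; abel]
      rw [inf_comm f, ← h4]
    calc ((z ⊔ 0) ⊓ e) ≤ z ⊓ e + ((-z) ⊔ 0) := h1
    _ = (f ⊓ ((m+1) • e) - m • e) + (m • e - f ⊓ (m • e)) := by rw [h2, h3]
    _ = f ⊓ ((m+1) • e) - f ⊓ (m • e) := by abel
  calc ∑ m ∈ Finset.range n, (((f - m • e) ⊔ 0) ⊓ e)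
      ≤ ∑ m ∈ Finset.range n, (f ⊓ ((m+1) • e) - f ⊓ (m • e)) :=
        sum_le_sum' _ _ _ fun m _ => step m
  _ = f ⊓ (n • e) - f ⊓ (0 • e) := Finset.sum_range_sub (fun m => f ⊓ (m • e)) n
  _ = f ⊓ (n • e) := by rw [zero_smul, inf_eq_right.mpr hf, sub_zero]
  _ ≤ f := inf_le_left

/-- two-element distributivity helper. -/
lemma inf_sup_le' {x a b c : E} (ha : x ⊓ a ≤ c) (hb : x ⊓ b ≤ c) : x ⊓ (a ⊔ b) ≤ c := by
  set s := a ⊔ b with hs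
  have key : ∀ y : E, y ≤ s → x ⊓ y ≤ c → y ≤ c + (s - x ⊓ s) := by
    intro y hys hyc
    have contr : x ⊓ s + y - s ≤ x ⊓ y := by
      have h1 : x ⊓ s + y - s = (x + y - s) ⊓ y := by
        rw [show x ⊓ s + y - s = (y - s) + (x ⊓ s) by abel, add_inf]
        congr 1 <;> abel
      rw [h1]
      refine inf_le_inf_right y ?_
      calc x + y - s = x + (y - s) := by abel
      _ ≤ x + 0 := add_le_add_right (sub_nonpos.mpr hys) x
      _ = x := add_zero x
    have h6 : x ⊓ s + y - s ≤ c := le_trans contr hyc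
    calc y = (x ⊓ s + y - s) + (s - x ⊓ s) := by abel
    _ ≤ c + (s - x ⊓ s) := add_le_add_left h6 _
  have h7 : s ≤ c + (s - x ⊓ s) :=
    sup_le (key a le_sup_left ha) (key b le_sup_right hb)
  have h8 : x ⊓ s + s ≤ c + s := by
    calc x ⊓ s + s ≤ x ⊓ s + (c + (s - x ⊓ s)) := add_le_add_right h7 _
    _ = c + s := by abel
  exact le_of_add_le_add_right h8

/-- weak order unit: `bandProj e f = f` for `f ≥ 0`. -/
lemma bandProj_e_eq {e f : E} (he : 0 ≤ e) (hwu : ∀ x : E, e ⊓ |x| = 0 → x = 0)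
    (hf : 0 ≤ f) : bandProj e f = f := by
  set q := bandProj e f with hq
  have hqle : q ≤ f := bandProj_le e f
  set d := f - q with hd
  have hd0 : 0 ≤ d := sub_nonneg.mpr hqle
  have hkey : ∀ m : ℕ, d ⊓ e ≤ ((f - m • e) ⊔ 0) ⊓ e := by
    intro m
    refine inf_le_inf_right e ?_
    have h1 : f ⊓ (m • e) ≤ q := le_bandProj e f m
    have h2 : d ≤ f - f ⊓ (m • e) := sub_le_sub_left h1 f
    have h3 : f - f ⊓ (m • e) = (f - m • e) ⊔ 0 :=
      sub_eq_iff_eq_add.mpr (by rw [add_comm]; exact cut_decomp f (m • e))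
    rwa [h3] at h2
  have harch : ∀ n : ℕ, n • (d ⊓ e) ≤ f := by
    intro n
    calc n • (d ⊓ e) = ∑ _m ∈ Finset.range n, (d ⊓ e) := by
          rw [Finset.sum_const, Finset.card_range]
    _ ≤ ∑ m ∈ Finset.range n, (((f - m • e) ⊔ 0) ⊓ e) :=
          sum_le_sum' _ _ _ fun m _ => hkey m
    _ ≤ f := telescope_le hf he n
  have hde : d ⊓ e ≤ 0 := arch harch
  have hde0 : d ⊓ e = 0 := le_antisymm hde (le_inf hd0 he)
  have : d = 0 := hwu d (by rw [abs_of_nonneg hd0, inf_comm]; exact hde0)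
  rw [hd, sub_eq_zero] at this
  exact this.symm

/-- the band projection of `e` on the band of `g` is a component, and its
complement is disjoint from `g`. -/
lemma bandProj_band_disjoint {e g : E} (he : 0 ≤ e) (hg : 0 ≤ g) :
    (e - bandProj g e) ⊓ g = 0 := by
  set q := bandProj g e with hq
  have hqe : q ≤ e := bandProj_le g e
  set t := (e - q) ⊓ g with ht
  have ht0 : 0 ≤ t := le_inf (sub_nonneg.mpr hqe) hg
  have hkey : ∀ k : ℕ, e ⊓ k • g ≤ q - t := by
    intro k
    rw [le_sub_iff_add_le]
    have h1 : e ⊓ k • g + t ≤ e := by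
      calc e ⊓ k • g + t ≤ q + (e - q) := add_le_add (le_bandProj g e k) inf_le_left
      _ = e := by abel
    have h2 : e ⊓ k • g + t ≤ (k+1) • g := by
      rw [succ_nsmul]
      exact add_le_add inf_le_right inf_le_right
    calc e ⊓ k • g + t ≤ e ⊓ ((k+1) • g) := le_inf h1 h2
    _ ≤ q := le_bandProj g e (k+1)
  have hqt : q ≤ q - t := by
    calc q = sSup (Set.range fun n : ℕ => e ⊓ n • g) := by rw [hq, bandProj_def]
    _ ≤ q - t := csSup_le (Set.range_nonempty _) (by rintro y ⟨k, rfl⟩; exact hkey k)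
  have : q + t ≤ q + 0 := by
    rw [add_zero]
    exact le_sub_iff_add_le.mp hqt
  exact le_antisymm (le_of_add_le_add_left this) ht0

lemma isComponent_bandProj {e g : E} (he : 0 ≤ e) (hg : 0 ≤ g) :
    IsComponent e (bandProj g e) := by
  set q := bandProj g e with hq
  have hq0 : 0 ≤ q := bandProj_nonneg g he
  have hqe : q ≤ e := bandProj_le g e
  have ht : (e - q) ⊓ g = 0 := bandProj_band_disjoint he hg
  refine ⟨hq0, hqe, ?_⟩
  rw [inf_comm]
  apply le_antisymm _ (le_inf (sub_nonneg.mpr hqe) hq0)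
  calc (e - q) ⊓ q = (e - q) ⊓ sSup (Set.range fun n : ℕ => e ⊓ n • g) := by
        rw [hq, bandProj_def]
  _ ≤ 0 := by
      apply inf_csSup_le (Set.range_nonempty _) (bandProj_bddAbove g e)
      rintro y ⟨k, rfl⟩
      have hzero : (e - q) ⊓ (k • g) = 0 := disjoint_nsmul (sub_nonneg.mpr hqe) hg ht k
      show (e - q) ⊓ (e ⊓ k • g) ≤ 0
      calc (e - q) ⊓ (e ⊓ k • g) ≤ (e - q) ⊓ (k • g) := inf_le_inf_left _ inf_le_right
      _ = 0 := hzero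

lemma compl_inf_eq (e c d : E) : e - (c ⊓ d) = (e - c) ⊔ (e - d) := by
  rw [sub_eq_add_neg, neg_inf, add_sup]
  congr 1 <;> abel

lemma compl_sup_eq (e c d : E) : e - (c ⊔ d) = (e - c) ⊓ (e - d) := by
  rw [sub_eq_add_neg, neg_sup, add_inf]
  congr 1 <;> abel

lemma isComponent_compl {e c : E} (h : IsComponent e c) : IsComponent e (e - c) := by
  obtain ⟨h0, hle, hd⟩ := h
  refine ⟨sub_nonneg.mpr hle, by
    calc e - c ≤ e - 0 := sub_le_sub_left h0 e
    _ = e := sub_zero e, ?_⟩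
  rw [sub_sub_cancel, inf_comm]
  exact hd

lemma isComponent_inf {e c d : E} (hc : IsComponent e c) (hd : IsComponent e d) :
    IsComponent e (c ⊓ d) := by
  refine ⟨le_inf hc.1 hd.1, le_trans inf_le_left hc.2.1, ?_⟩
  rw [compl_inf_eq]
  apply le_antisymm _ (le_inf (le_inf hc.1 hd.1) (le_sup_of_le_left (sub_nonneg.mpr hc.2.1)))
  apply inf_sup_le'
  · calc (c ⊓ d) ⊓ (e - c) ≤ c ⊓ (e - c) := inf_le_inf_right _ inf_le_left
    _ = 0 := hc.2.2
  · calc (c ⊓ d) ⊓ (e - d) ≤ d ⊓ (e - d) := inf_le_inf_right _ inf_le_right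
    _ = 0 := hd.2.2

lemma isComponent_sup {e c d : E} (hc : IsComponent e c) (hd : IsComponent e d) :
    IsComponent e (c ⊔ d) := by
  refine ⟨le_trans hc.1 le_sup_left, sup_le hc.2.1 hd.2.1, ?_⟩
  rw [compl_sup_eq]
  apply le_antisymm _ (le_inf (le_trans hc.1 le_sup_left)
    (le_inf (sub_nonneg.mpr hc.2.1) (sub_nonneg.mpr hd.2.1)))
  rw [inf_comm]
  apply inf_sup_le'
  · calc ((e - c) ⊓ (e - d)) ⊓ c ≤ (e - c) ⊓ c := inf_le_inf_right _ inf_le_left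
    _ = 0 := by rw [inf_comm]; exact hc.2.2
  · calc ((e - c) ⊓ (e - d)) ⊓ d ≤ (e - d) ⊓ d := inf_le_inf_right _ inf_le_right
    _ = 0 := by rw [inf_comm]; exact hd.2.2

lemma comp_diff_eq {e c d : E} (hc : IsComponent e c) (hd : IsComponent e d)
    (hdc : d ≤ c) : c - d = c ⊓ (e - d) := by
  have h1 : c = c ⊓ (e - d) + ((c - (e - d)) ⊔ 0) := cut_decomp c (e - d)
  have h2 : (c - (e - d)) ⊔ 0 = d := by
    have e1 : c - (e - d) = d - (e - c) := by abel
    have e2 : d ⊓ (e - c) = 0 := by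
      apply le_antisymm _ (le_inf hd.1 (sub_nonneg.mpr hc.2.1))
      calc d ⊓ (e - c) ≤ c ⊓ (e - c) := inf_le_inf_right _ hdc
      _ = 0 := hc.2.2
    have e3 : d - d ⊓ (e - c) = (d - (e - c)) ⊔ 0 :=
      sub_eq_iff_eq_add.mpr (by rw [add_comm]; exact cut_decomp d (e - c))
    rw [e1, ← e3, e2, sub_zero]
  rw [h2] at h1
  exact sub_eq_iff_eq_add.mpr h1

lemma isComponent_diff {e c d : E} (hc : IsComponent e c) (hd : IsComponent e d)
    (hdc : d ≤ c) : IsComponent e (c - d) := by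
  rw [comp_diff_eq hc hd hdc]
  exact isComponent_inf hc (isComponent_compl hd)

lemma diff_disjoint {e c d : E} (hc : IsComponent e c) (hd : IsComponent e d)
    (hdc : d ≤ c) : (c - d) ⊓ d = 0 := by
  rw [comp_diff_eq hc hd hdc]
  apply le_antisymm _ (le_inf (le_inf hc.1 (sub_nonneg.mpr hd.2.1)) hd.1)
  calc (c ⊓ (e - d)) ⊓ d ≤ (e - d) ⊓ d := inf_le_inf_right _ inf_le_right
  _ = 0 := by rw [inf_comm]; exact hd.2.2

lemma isComponent_sum {ι : Type*} {e : E} (s : Finset ι) (d : ι → E)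
    (hcomp : ∀ i ∈ s, IsComponent e (d i)) (he : 0 ≤ e)
    (hdisj : ∀ i ∈ s, ∀ j ∈ s, i ≠ j → d i ⊓ d j = 0) :
    IsComponent e (∑ i ∈ s, d i) := by
  classical
  induction s using Finset.induction with
  | empty =>
    refine ⟨by simp, by simpa using he, ?_⟩
    rw [Finset.sum_empty, sub_zero]
    exact le_antisymm inf_le_left (le_inf le_rfl he)
  | insert a s' hns ih =>
    rw [Finset.sum_insert hns]
    have hca : IsComponent e (d a) := hcomp a (Finset.mem_insert_self a s')
    have hcs : IsComponent e (∑ i ∈ s', d i) :=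
      ih (fun i hi => hcomp i (Finset.mem_insert_of_mem hi))
        (fun i hi j hj hij => hdisj i (Finset.mem_insert_of_mem hi)
          j (Finset.mem_insert_of_mem hj) hij)
    have hdisj2 : d a ⊓ (∑ i ∈ s', d i) = 0 := by
      apply le_antisymm _ (le_inf hca.1 hcs.1)
      calc d a ⊓ (∑ i ∈ s', d i) ≤ ∑ i ∈ s', d a ⊓ d i :=
            inf_sum_le s' d (d a) (fun i hi => (hcomp i (Finset.mem_insert_of_mem hi)).1) hca.1
      _ = 0 := Finset.sum_eq_zero fun i hi => hdisj a (Finset.mem_insert_self a s')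
            i (Finset.mem_insert_of_mem hi) (fun h => hns (h ▸ hi))
    rw [add_eq_sup_of_disjoint hdisj2]
    exact isComponent_sup hca hcs

/-- cutoff estimate: if the component `c` is disjoint from `(f - a)⁺` then the band
projection of `f` onto `c` is at most `a`. -/
lemma bandProj_le_cutoff {c f a : E} (hc : 0 ≤ c) (hf : 0 ≤ f) (ha : 0 ≤ a)
    (hd : c ⊓ ((f - a) ⊔ 0) = 0) : bandProj c f ≤ a := by
  have h1 : bandProj c f = bandProj c (f ⊓ a + ((f - a) ⊔ 0)) := by rw [← cut_decomp]
  have h2 : bandProj c ((f - a) ⊔ 0) = 0 :=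
    bandProj_disjoint_zero le_sup_right hc (by rw [inf_comm]; exact hd)
  calc bandProj c f ≤ bandProj c (f ⊓ a) + bandProj c ((f - a) ⊔ 0) := by
        rw [h1]; exact bandProj_subadd (le_inf hf ha) le_sup_right hc
  _ = bandProj c (f ⊓ a) := by rw [h2, add_zero]
  _ ≤ f ⊓ a := bandProj_le _ _
  _ ≤ a := inf_le_right

/-- localized estimate: if the component `c` is disjoint from `(w - e)⁺` then
`bandProj c (n•w) ≤ n•c`. -/
lemma bandProj_loc {e c w : E} (hcomp : IsComponent e c) (hw : 0 ≤ w)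
    (hd : c ⊓ ((w - e) ⊔ 0) = 0) (n : ℕ) : bandProj c (n • w) ≤ n • c := by
  have he : 0 ≤ e := le_trans hcomp.1 hcomp.2.1
  have h1 : n • w = n • (w ⊓ e) + n • ((w - e) ⊔ 0) := by
    rw [← smul_add, ← cut_decomp]
  have h2 : bandProj c (n • ((w - e) ⊔ 0)) = 0 :=
    bandProj_disjoint_zero (nsmul_nonneg' le_sup_right n) hcomp.1
      (by rw [inf_comm]; exact disjoint_nsmul hcomp.1 le_sup_right hd n)
  calc bandProj c (n • w)
      ≤ bandProj c (n • (w ⊓ e)) + bandProj c (n • ((w - e) ⊔ 0)) := by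
        rw [h1]
        exact bandProj_subadd (nsmul_nonneg' (le_inf hw he) n)
          (nsmul_nonneg' le_sup_right n) hcomp.1
  _ = bandProj c (n • (w ⊓ e)) := by rw [h2, add_zero]
  _ ≤ bandProj c (n • e) := bandProj_mono_f c (nsmul_le_nsmul' inf_le_right n)
  _ ≤ n • c := bandProj_nsmul_e_le hcomp n

/-- Chebyshev: the component of `e` in the band of `(f - e/i)⁺` is at most `i•f`. -/
lemma cheb {e f : E} (he : 0 ≤ e) (hf : 0 ≤ f) {i : ℕ} (hi : 0 < i) :
    bandProj ((f - (i:ℝ)⁻¹ • e) ⊔ 0) e ≤ i • f := by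
  set g := (f - (i:ℝ)⁻¹ • e) ⊔ 0 with hg
  set q := bandProj g e with hq
  set z := i • f - e with hz
  have hg0 : (0:E) ≤ g := le_sup_right
  have key1 : i • g = z ⊔ 0 := by
    rw [hg, nsmul_posPart, smul_sub, invSmul_cancel hi, hz]
  have key2 : g ⊓ ((-z) ⊔ 0) = 0 := by
    have hzz : (z ⊔ 0) ⊓ ((-z) ⊔ 0) = 0 := posPart_inf_negPart_eq_zero z
    have h3 : i • (g ⊓ ((-z) ⊔ 0)) ≤ 0 := by
      have h4 : i • (g ⊓ ((-z) ⊔ 0)) ≤ (i • g) ⊓ (i • ((-z) ⊔ 0)) :=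
        le_inf (nsmul_le_nsmul' inf_le_left i) (nsmul_le_nsmul' inf_le_right i)
      have h5 : (i • g) ⊓ (i • ((-z) ⊔ 0)) = 0 := by
        rw [key1]
        have h6 := disjoint_nsmul₂ (le_sup_right : (0:E) ≤ z ⊔ 0)
          (le_sup_right : (0:E) ≤ (-z) ⊔ 0) hzz i 1
        rw [one_smul] at h6
        exact h6
      rw [h5] at h4
      exact h4
    have h7 : g ⊓ ((-z) ⊔ 0) ≤ 0 := by
      apply nsmul_cancel_le hi
      rw [smul_zero]
      exact h3
    exact le_antisymm h7 (le_inf hg0 le_sup_right)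
  have key3 : q ⊓ ((-z) ⊔ 0) = 0 := by
    apply le_antisymm _ (le_inf (bandProj_nonneg g he) le_sup_right)
    rw [inf_comm]
    calc ((-z) ⊔ 0) ⊓ q = ((-z) ⊔ 0) ⊓ sSup (Set.range fun n : ℕ => e ⊓ n • g) := by
          rw [hq, bandProj_def]
    _ ≤ 0 := by
        apply inf_csSup_le (Set.range_nonempty _) (bandProj_bddAbove g e)
        rintro y ⟨k, rfl⟩
        have h8 : ((-z) ⊔ 0) ⊓ (k • g) = 0 :=
          disjoint_nsmul le_sup_right hg0 (by rw [inf_comm]; exact key2) k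
        show ((-z) ⊔ 0) ⊓ (e ⊓ k • g) ≤ 0
        calc ((-z) ⊔ 0) ⊓ (e ⊓ k • g) ≤ ((-z) ⊔ 0) ⊓ (k • g) := inf_le_inf_left _ inf_le_right
        _ = 0 := h8
  have h9 : (q - i • f) ⊔ 0 ≤ q ⊓ ((-z) ⊔ 0) := by
    apply le_inf
    · have ha : q - i • f ≤ q := sub_le_self q (nsmul_nonneg' hf i)
      calc (q - i • f) ⊔ 0 ≤ q ⊔ 0 := sup_le_sup_right ha 0
      _ = q := sup_eq_left.mpr (bandProj_nonneg g he)
    · have hb : q - i • f ≤ -z := by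
        rw [hz, neg_sub]
        exact sub_le_sub_right (bandProj_le g e) _
      exact sup_le_sup_right hb 0
  rw [key3] at h9
  have h10 : q - i • f ≤ 0 := le_trans le_sup_left h9
  exact sub_nonpos.mp h10

/-- band decomposition along a component. -/
lemma bandProj_decomp {e c f : E} (he : 0 ≤ e) (hwu : ∀ x : E, e ⊓ |x| = 0 → x = 0)
    (hcomp : IsComponent e c) (hf : 0 ≤ f) :
    bandProj c f + bandProj (e - c) f = f := by
  obtain ⟨hc0, hce, hcd⟩ := hcomp
  have hec0 : 0 ≤ e - c := sub_nonneg.mpr hce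
  apply le_antisymm
  · rw [bandProj_def c f, bandProj_def (e - c) f]
    apply add_csSup_le (bandProj_bddAbove c f) (bandProj_bddAbove (e-c) f)
    intro n m
    have hd2 : (f ⊓ n • c) ⊓ (f ⊓ m • (e - c)) = 0 := by
      apply le_antisymm _ (le_inf (le_inf hf (nsmul_nonneg' hc0 n))
        (le_inf hf (nsmul_nonneg' hec0 m)))
      calc (f ⊓ n • c) ⊓ (f ⊓ m • (e - c)) ≤ (n • c) ⊓ (m • (e - c)) :=
            inf_le_inf inf_le_right inf_le_right
      _ = 0 := disjoint_nsmul₂ hc0 hec0 hcd m n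
    rw [add_eq_sup_of_disjoint hd2]
    exact sup_le inf_le_left inf_le_left
  · conv_lhs => rw [← bandProj_e_eq he hwu hf]
    rw [bandProj_def e f]
    apply csSup_le (Set.range_nonempty _)
    rintro y ⟨n, rfl⟩
    have h1 : n • e = n • c + n • (e - c) := by rw [← smul_add]; congr 1; abel
    calc f ⊓ n • e ≤ f ⊓ (n • c) + f ⊓ (n • (e - c)) := by
          rw [h1]
          exact inf_add_le (nsmul_nonneg' hc0 n) (nsmul_nonneg' hec0 n) hf
    _ ≤ bandProj c f + bandProj (e - c) f :=
          add_le_add (le_bandProj c f n) (le_bandProj (e-c) f n)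

lemma invSmul_nsmul_comm (n t : ℕ) (x : E) :
    (n:ℝ)⁻¹ • (t • x) = t • ((n:ℝ)⁻¹ • x) := by
  rw [← Nat.cast_smul_eq_nsmul ℝ t x, ← Nat.cast_smul_eq_nsmul ℝ t ((n:ℝ)⁻¹ • x),
    smul_smul, smul_smul, mul_comm]

/-- `c ≤ (b - t•e)⁺` for all `t` forces `c ≤ 0` when `e` is a weak unit. -/
lemma le_zero_of_le_excess {e b c : E} (he : 0 ≤ e)
    (hwu : ∀ x : E, e ⊓ |x| = 0 → x = 0) (hb : 0 ≤ b)
    (h : ∀ t : ℕ, c ≤ (b - t • e) ⊔ 0) : c ≤ 0 := by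
  set y := c ⊔ 0 with hy
  have hy0 : 0 ≤ y := le_sup_right
  have hyle : ∀ t : ℕ, y ≤ (b - t • e) ⊔ 0 := by
    intro t
    rw [hy]
    exact sup_le (h t) le_sup_right
  have harch : ∀ n : ℕ, n • (y ⊓ e) ≤ b := by
    intro n
    calc n • (y ⊓ e) = ∑ _t ∈ Finset.range n, (y ⊓ e) := by
          rw [Finset.sum_const, Finset.card_range]
    _ ≤ ∑ t ∈ Finset.range n, (((b - t • e) ⊔ 0) ⊓ e) :=
          sum_le_sum' _ _ _ fun t _ => inf_le_inf_right e (hyle t)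
    _ ≤ b := telescope_le hb he n
  have h1 : y ⊓ e ≤ 0 := arch harch
  have h2 : y ⊓ e = 0 := le_antisymm h1 (le_inf hy0 he)
  have h3 : y = 0 := hwu y (by rw [abs_of_nonneg hy0, inf_comm]; exact h2)
  calc c ≤ y := le_sup_left
  _ = 0 := h3

section Main

variable {e b : E} {f : ℕ → E}

/-- the backward direction of Koopman-von Neumann. -/
lemma kvn_backward (he : 0 ≤ e) (hwu : ∀ x : E, e ⊓ |x| = 0 → x = 0)
    (hf0 : ∀ n, 0 ≤ f n) (hb : ∀ n, f n ≤ b)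
    (p : ℕ → E) (hp : ∀ n, IsComponent e (p n)) (hdz : DensityZero p)
    (hoc : OrderConvergesTo (fun n => bandProj (e - p n) (f n)) 0) :
    OrderConvergesTo (fun n => (n : ℝ)⁻¹ • ∑ k ∈ Finset.range n, f k) (0 : E) := by
  have hb0 : 0 ≤ b := le_trans (hf0 0) (hb 0)
  set A : ℕ → E := fun n => (n : ℝ)⁻¹ • ∑ k ∈ Finset.range n, f k with hA
  set h : ℕ → E := fun n => bandProj (e - p n) (f n) with hh
  set g : ℕ → E := fun n => (n : ℝ)⁻¹ • ∑ k ∈ Finset.range n, p k with hgdef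
  have hsum0 : ∀ n, (0:E) ≤ ∑ k ∈ Finset.range n, f k :=
    fun n => sum_nonneg' _ _ fun k _ => hf0 k
  have hA0 : ∀ n, 0 ≤ A n := by
    intro n
    rcases Nat.eq_zero_or_pos n with rfl | hn
    · simp [hA]
    · exact invSmul_nonneg hn (hsum0 n)
  have hAb : ∀ n, A n ≤ b := by
    intro n
    rcases Nat.eq_zero_or_pos n with rfl | hn
    · simpa [hA] using hb0
    · show (n : ℝ)⁻¹ • ∑ k ∈ Finset.range n, f k ≤ b
      rw [← invSmul_cancel' hn b]
      apply invSmul_mono hn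
      calc ∑ k ∈ Finset.range n, f k ≤ ∑ _k ∈ Finset.range n, b :=
            sum_le_sum' _ _ _ fun k _ => hb k
      _ = n • b := by rw [Finset.sum_const, Finset.card_range]
  have hh0 : ∀ n, 0 ≤ h n := fun n => bandProj_nonneg _ (hf0 n)
  have hhb : ∀ n, h n ≤ b := fun n => le_trans (bandProj_le _ _) (hb n)
  have hg0 : ∀ n, 0 ≤ g n := by
    intro n
    rcases Nat.eq_zero_or_pos n with rfl | hn
    · simp [hgdef]
    · exact invSmul_nonneg hn (sum_nonneg' _ _ fun k _ => (hp k).1)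
  obtain ⟨w, hw_anti, hw_glb, hw_tail⟩ := hdz
  obtain ⟨v, hv_anti, hv_glb, hv_tail⟩ := hoc
  have hw0 : ∀ m, 0 ≤ w m := fun m => hw_glb.1 ⟨m, rfl⟩
  have hv0 : ∀ m, 0 ≤ v m := fun m => hv_glb.1 ⟨m, rfl⟩
  have hwZ : ZeroFam w := ⟨hw_anti, fun c hc => hw_glb.2 (by rintro y ⟨m, rfl⟩; exact hc m)⟩
  have hvZ : ZeroFam v := ⟨hv_anti, fun c hc => hv_glb.2 (by rintro y ⟨m, rfl⟩; exact hc m)⟩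
  apply orderConv_of_nullSeq hA0 hAb
  intro c hc
  -- main estimate
  have main : ∀ t m m' : ℕ, c ≤ t • w m + ((b - t • e) ⊔ 0) + v m' := by
    intro t m m'
    obtain ⟨N1, hN1⟩ := hw_tail m
    obtain ⟨N2, hN2⟩ := hv_tail m'
    set N₀ : ℕ := max (max N1 N2) 1 with hN₀
    have key : ∀ n ≥ N₀, A n ≤ (t • w m + ((b - t • e) ⊔ 0) + v m') + N2 • ((n:ℝ)⁻¹ • b) := by
      intro n hn
      have hn1 : 0 < n := lt_of_lt_of_le (Nat.succ_pos 0) (le_trans (le_max_right _ _) hn)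
      have hnN1 : N1 ≤ n := le_trans (le_max_left _ _) (le_trans (le_max_left _ _) hn)
      have hnN2 : N2 ≤ n := le_trans (le_max_right _ _) (le_trans (le_max_left _ _) hn)
      -- decompose f
      have hdecomp : ∀ k, f k = bandProj (p k) (f k) + h k :=
        fun k => (bandProj_decomp he hwu (hp k) (hf0 k)).symm
      have hbp : ∀ k, bandProj (p k) (f k) ≤ t • p k + ((b - t • e) ⊔ 0) := by
        intro k
        calc bandProj (p k) (f k) ≤ bandProj (p k) b := bandProj_mono_f _ (hb k)
        _ ≤ bandProj (p k) (b ⊓ (t • e)) + bandProj (p k) ((b - t • e) ⊔ 0) := by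
            conv_lhs => rw [cut_decomp b (t • e)]
            exact bandProj_subadd (le_inf hb0 (nsmul_nonneg' he t)) le_sup_right (hp k).1
        _ ≤ bandProj (p k) (t • e) + ((b - t • e) ⊔ 0) :=
            add_le_add (bandProj_mono_f _ inf_le_right) (bandProj_le _ _)
        _ ≤ t • p k + ((b - t • e) ⊔ 0) :=
            add_le_add_left (bandProj_nsmul_e_le (hp k) t) _
      have hhk : ∀ k, N2 ≤ k → h k ≤ v m' := by
        intro k hk
        have := hN2 k hk
        rwa [sub_zero, abs_of_nonneg (hh0 k)] at this
      have hsum : ∑ k ∈ Finset.range n, f k ≤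
          (t • ∑ k ∈ Finset.range n, p k + n • ((b - t • e) ⊔ 0)) + (N2 • b + n • v m') := by
        have e1 : ∑ k ∈ Finset.range n, f k
            = ∑ k ∈ Finset.range n, bandProj (p k) (f k) + ∑ k ∈ Finset.range n, h k := by
          rw [← Finset.sum_add_distrib]
          exact Finset.sum_congr rfl fun k _ => hdecomp k
        have e2 : ∑ k ∈ Finset.range n, bandProj (p k) (f k)
            ≤ t • ∑ k ∈ Finset.range n, p k + n • ((b - t • e) ⊔ 0) := by
          calc ∑ k ∈ Finset.range n, bandProj (p k) (f k)
              ≤ ∑ k ∈ Finset.range n, (t • p k + ((b - t • e) ⊔ 0)) :=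
                sum_le_sum' _ _ _ fun k _ => hbp k
          _ = t • ∑ k ∈ Finset.range n, p k + n • ((b - t • e) ⊔ 0) := by
              rw [Finset.sum_add_distrib, Finset.smul_sum, Finset.sum_const,
                Finset.card_range]
        have e3 : ∑ k ∈ Finset.range n, h k ≤ N2 • b + n • v m' := by
          rw [← Finset.sum_range_add_sum_Ico h hnN2]
          apply add_le_add
          · calc ∑ k ∈ Finset.range N2, h k ≤ ∑ _k ∈ Finset.range N2, b :=
                sum_le_sum' _ _ _ fun k _ => hhb k
            _ = N2 • b := by rw [Finset.sum_const, Finset.card_range]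
          · calc ∑ k ∈ Finset.Ico N2 n, h k ≤ ∑ _k ∈ Finset.Ico N2 n, v m' :=
                sum_le_sum' _ _ _ fun k hk => hhk k (Finset.mem_Ico.mp hk).1
            _ = (n - N2) • v m' := by rw [Finset.sum_const, Nat.card_Ico]
            _ ≤ n • v m' := nsmul_mono_nat (hv0 m') (Nat.sub_le n N2)
        rw [e1]
        exact add_le_add e2 e3
      have hgn : g n ≤ w m := by
        have := hN1 n hnN1
        rwa [sub_zero, abs_of_nonneg (hg0 n)] at this
      -- divide by n
      have hAn : A n ≤ t • g n + ((b - t • e) ⊔ 0) + (N2 • ((n:ℝ)⁻¹ • b) + v m') := by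
        have h4 : A n ≤ (n:ℝ)⁻¹ • ((t • ∑ k ∈ Finset.range n, p k + n • ((b - t • e) ⊔ 0))
            + (N2 • b + n • v m')) := invSmul_mono hn1 hsum
        have h5 : (n:ℝ)⁻¹ • ((t • ∑ k ∈ Finset.range n, p k + n • ((b - t • e) ⊔ 0))
            + (N2 • b + n • v m'))
            = t • g n + ((b - t • e) ⊔ 0) + (N2 • ((n:ℝ)⁻¹ • b) + v m') := by
          rw [smul_add, smul_add, smul_add, invSmul_nsmul_comm n t, invSmul_nsmul_comm n N2,
            invSmul_cancel' hn1, invSmul_cancel' hn1, hgdef]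
        rw [h5] at h4
        exact h4
      calc A n ≤ t • g n + ((b - t • e) ⊔ 0) + (N2 • ((n:ℝ)⁻¹ • b) + v m') := hAn
      _ ≤ t • w m + ((b - t • e) ⊔ 0) + (N2 • ((n:ℝ)⁻¹ • b) + v m') := by
          apply add_le_add_left
          apply add_le_add_left
          exact nsmul_le_nsmul' hgn t
      _ = (t • w m + ((b - t • e) ⊔ 0) + v m') + N2 • ((n:ℝ)⁻¹ • b) := by abel
    -- let n → ∞
    have hlim : c - (t • w m + ((b - t • e) ⊔ 0) + v m') ≤ 0 := by
      apply le_zero_of_le_nsmul_invSmul hb0 N2 N₀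
      intro N hN hNpos
      rw [sub_le_iff_le_add, add_comm]
      calc c ≤ tailSup A N := hc N
      _ ≤ (t • w m + ((b - t • e) ⊔ 0) + v m') + N2 • ((N:ℝ)⁻¹ • b) := by
          apply tailSup_le
          intro n hn
          calc A n ≤ (t • w m + ((b - t • e) ⊔ 0) + v m') + N2 • ((n:ℝ)⁻¹ • b) :=
                key n (le_trans hN hn)
          _ ≤ (t • w m + ((b - t • e) ⊔ 0) + v m') + N2 • ((N:ℝ)⁻¹ • b) := by
              apply add_le_add_right
              exact nsmul_le_nsmul' (invSmul_e_antitone hNpos hn hb0) N2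
    calc c = (c - (t • w m + ((b - t • e) ⊔ 0) + v m'))
        + (t • w m + ((b - t • e) ⊔ 0) + v m') := by abel
    _ ≤ 0 + (t • w m + ((b - t • e) ⊔ 0) + v m') := add_le_add_left hlim _
    _ = t • w m + ((b - t • e) ⊔ 0) + v m' := by abel
  -- remove the three auxiliary parameters
  have step1 : ∀ t m' : ℕ, c ≤ ((b - t • e) ⊔ 0) + v m' := by
    intro t m'
    apply le_of_le_add_zeroFam (zeroFam_nsmul hwZ t)
    intro m
    calc c ≤ t • w m + ((b - t • e) ⊔ 0) + v m' := main t m m'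
    _ = ((b - t • e) ⊔ 0) + v m' + t • w m := by abel
  have step2 : ∀ t : ℕ, c ≤ (b - t • e) ⊔ 0 := by
    intro t
    apply le_of_le_add_zeroFam hvZ
    intro m'
    exact step1 t m'
  exact le_zero_of_le_excess he hwu hb0 step2

end Main

/-! ### the forward construction -/

section Forward

variable (e : E) (f : ℕ → E)

/-- level-`j` bad component of `e` at time `n` (threshold `1/(j+1)`). -/
noncomputable def qc (j n : ℕ) : E :=
  bandProj ((f n - ((j+1 : ℕ):ℝ)⁻¹ • e) ⊔ 0) e

/-- Cesàro averages of the level-`j` components. -/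
noncomputable def GG (j n : ℕ) : E := (n:ℝ)⁻¹ • ∑ k ∈ Finset.range n, qc e f j k

/-- tail suprema of `GG`. -/
noncomputable def ww (j m : ℕ) : E := tailSup (GG e f j) m

/-- region of `e` where, from time `m` on, the level-`j` density is below `2^{-(j+1)}`. -/
noncomputable def dd (j m : ℕ) : E :=
  e - bandProj ((2^(j+1) • ww e f j m - e) ⊔ 0) e

/-- intersection of the regions of levels `≤ j`. -/
noncomputable def DD : ℕ → ℕ → E
  | 0, m => dd e f 0 m
  | (j+1), m => DD j m ⊓ dd e f (j+1) m

/-- local level pieces at time `n` (level capped at `n-1`). -/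
noncomputable def mu (j n : ℕ) : E :=
  if j + 1 < n then DD e f j n - DD e f (j+1) n else DD e f j n

/-- the bad components. -/
noncomputable def pp (n : ℕ) : E :=
  ∑ j ∈ Finset.range n, (qc e f j n ⊓ mu e f j n)

/-- increments of the regions. -/
noncomputable def delta (j : ℕ) : ℕ → E
  | 0 => dd e f j 0
  | (m+1) => dd e f j (m+1) - dd e f j m

variable {e} {f} {b : E}

section ForwardLemmas

variable (he : 0 ≤ e) (hwu : ∀ x : E, e ⊓ |x| = 0 → x = 0)
  (hf0 : ∀ n, 0 ≤ f n) (hb : ∀ n, f n ≤ b)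

include he

lemma qc_comp (j n : ℕ) : IsComponent e (qc e f j n) :=
  isComponent_bandProj he le_sup_right

include hf0 in
lemma qc_mono_level {i j : ℕ} (hij : i ≤ j) (n : ℕ) : qc e f i n ≤ qc e f j n := by
  apply bandProj_mono_p
  apply sup_le_sup_right
  apply sub_le_sub_left
  exact invSmul_e_antitone (Nat.succ_pos i) (Nat.succ_le_succ hij) he

include hf0 in
lemma qc_cut (j n : ℕ) :
    bandProj (e - qc e f j n) (f n) ≤ ((j+1 : ℕ):ℝ)⁻¹ • e := by
  apply bandProj_le_cutoff (sub_nonneg.mpr (bandProj_le _ _)) (hf0 n)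
    (invSmul_nonneg (Nat.succ_pos j) he)
  exact bandProj_band_disjoint he le_sup_right

include hf0 in
lemma qc_cheb (j n : ℕ) : qc e f j n ≤ (j+1) • f n :=
  cheb he (hf0 n) (Nat.succ_pos j)

lemma qc_le_e (j n : ℕ) : qc e f j n ≤ e := bandProj_le _ _

lemma qc_nonneg (j n : ℕ) : 0 ≤ qc e f j n := bandProj_nonneg _ he

lemma GG_nonneg (j n : ℕ) : 0 ≤ GG e f j n := by
  rcases Nat.eq_zero_or_pos n with rfl | hn
  · simp [GG]
  · exact invSmul_nonneg hn (sum_nonneg' _ _ fun k _ => qc_nonneg he j k)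

lemma GG_le_e (j n : ℕ) : GG e f j n ≤ e := by
  rcases Nat.eq_zero_or_pos n with rfl | hn
  · simpa [GG] using he
  · show (n:ℝ)⁻¹ • ∑ k ∈ Finset.range n, qc e f j k ≤ e
    apply (invSmul_le_iff hn).mpr
    calc ∑ k ∈ Finset.range n, qc e f j k ≤ ∑ _k ∈ Finset.range n, e :=
          sum_le_sum' _ _ _ fun k _ => qc_le_e he j k
    _ = n • e := by rw [Finset.sum_const, Finset.card_range]

lemma nsmul_GG (j : ℕ) {n : ℕ} (hn : 0 < n) :
    n • GG e f j n = ∑ k ∈ Finset.range n, qc e f j k := invSmul_cancel hn _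

lemma ww_nonneg (j m : ℕ) : 0 ≤ ww e f j m :=
  tailSup_nonneg (fun n => GG_le_e he j n) (fun n => GG_nonneg he j n) m

lemma ww_antitone (j : ℕ) : Antitone (ww e f j) :=
  tailSup_antitone (fun n => GG_le_e he j n)

lemma GG_le_ww (j : ℕ) {m n : ℕ} (h : m ≤ n) : GG e f j n ≤ ww e f j m :=
  le_tailSup (fun k => GG_le_e he j k) h

lemma dd_comp (j m : ℕ) : IsComponent e (dd e f j m) :=
  isComponent_compl (isComponent_bandProj he le_sup_right)

lemma dd_disj (j m : ℕ) :
    dd e f j m ⊓ ((2^(j+1) • ww e f j m - e) ⊔ 0) = 0 :=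
  bandProj_band_disjoint he le_sup_right

lemma dd_mono_m (j : ℕ) {m m' : ℕ} (h : m ≤ m') : dd e f j m ≤ dd e f j m' := by
  apply sub_le_sub_left
  apply bandProj_mono_p
  apply sup_le_sup_right
  apply sub_le_sub_right
  exact nsmul_le_nsmul' (ww_antitone he j h) _

lemma compl_dd_le (j m : ℕ) : e - dd e f j m ≤ 2^(j+1) • ww e f j m := by
  have h1 : e - dd e f j m = bandProj ((2^(j+1) • ww e f j m - e) ⊔ 0) e := by
    rw [dd, sub_sub_cancel]
  rw [h1]
  have h2 := cheb (f := 2^(j+1) • ww e f j m) he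
    (nsmul_nonneg' (ww_nonneg he j m) _) (Nat.one_pos)
  rw [Nat.cast_one, inv_one, one_smul, one_smul] at h2
  exact h2

lemma DD_comp (j m : ℕ) : IsComponent e (DD e f j m) := by
  induction j with
  | zero => exact dd_comp he 0 m
  | succ i ih => exact isComponent_inf ih (dd_comp he (i+1) m)

lemma DD_le_dd {i j : ℕ} (hij : i ≤ j) (m : ℕ) : DD e f j m ≤ dd e f i m := by
  induction j with
  | zero => rw [Nat.le_zero.mp hij]; exact le_rfl
  | succ l ih =>
    rcases Nat.lt_or_ge i (l+1) with h | h
    · calc DD e f (l+1) m ≤ DD e f l m := inf_le_left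
      _ ≤ dd e f i m := ih (Nat.lt_succ_iff.mp h)
    · rw [Nat.le_antisymm hij h]
      exact inf_le_right

lemma DD_anti_j {j j' : ℕ} (h : j ≤ j') (m : ℕ) : DD e f j' m ≤ DD e f j m := by
  induction j' with
  | zero => rw [Nat.le_zero.mp h]
  | succ l ih =>
    rcases Nat.lt_or_ge j (l+1) with h2 | h2
    · calc DD e f (l+1) m ≤ DD e f l m := inf_le_left
      _ ≤ DD e f j m := ih (Nat.lt_succ_iff.mp h2)
    · rw [Nat.le_antisymm h h2]

lemma DD_mono_m (j : ℕ) {m m' : ℕ} (h : m ≤ m') : DD e f j m ≤ DD e f j m' := by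
  induction j with
  | zero => exact dd_mono_m he 0 h
  | succ l ih => exact inf_le_inf ih (dd_mono_m he (l+1) h)

lemma compl_DD_le (j m : ℕ) :
    e - DD e f j m ≤ ∑ l ∈ Finset.range (j+1), 2^(l+1) • ww e f l m := by
  induction j with
  | zero =>
    rw [Finset.sum_range_one]
    exact compl_dd_le he 0 m
  | succ i ih =>
    have h1 : e - DD e f (i+1) m = (e - DD e f i m) ⊔ (e - dd e f (i+1) m) :=
      compl_inf_eq e _ _
    have h2 : (e - DD e f i m) ⊔ (e - dd e f (i+1) m)
        ≤ (e - DD e f i m) + (e - dd e f (i+1) m) :=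
      sup_le (le_add_of_nonneg_right (sub_nonneg.mpr (dd_comp he (i+1) m).2.1))
        (le_add_of_nonneg_left (sub_nonneg.mpr (DD_comp he i m).2.1))
    calc e - DD e f (i+1) m = (e - DD e f i m) ⊔ (e - dd e f (i+1) m) := h1
    _ ≤ (e - DD e f i m) + (e - dd e f (i+1) m) := h2
    _ ≤ (∑ l ∈ Finset.range (i+1), 2^(l+1) • ww e f l m) + 2^(i+2) • ww e f (i+1) m :=
        add_le_add ih (compl_dd_le he (i+1) m)
    _ = ∑ l ∈ Finset.range (i+2), 2^(l+1) • ww e f l m := by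
        rw [Finset.sum_range_succ (fun l => 2^(l+1) • ww e f l m) (i+1),
          Finset.sum_range_succ (fun l => 2^(l+1) • ww e f l m) i]

lemma delta_nonneg (j m : ℕ) : 0 ≤ delta e f j m := by
  cases m with
  | zero => exact (dd_comp he j 0).1
  | succ i => exact sub_nonneg.mpr (dd_mono_m he j (Nat.le_succ i))

lemma delta_le_dd (j m : ℕ) : delta e f j m ≤ dd e f j m := by
  cases m with
  | zero => exact le_rfl
  | succ i =>
    show dd e f j (i+1) - dd e f j i ≤ dd e f j (i+1)
    calc dd e f j (i+1) - dd e f j i ≤ dd e f j (i+1) - 0 :=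
          sub_le_sub_left (dd_comp he j i).1 _
    _ = dd e f j (i+1) := sub_zero _

lemma delta_comp (j m : ℕ) : IsComponent e (delta e f j m) := by
  cases m with
  | zero => exact dd_comp he j 0
  | succ i =>
    show IsComponent e (dd e f j (i+1) - dd e f j i)
    exact isComponent_diff (dd_comp he j (i+1)) (dd_comp he j i)
      (dd_mono_m he j (Nat.le_succ i))

lemma delta_sum (j k : ℕ) :
    ∑ m ∈ Finset.range (k+1), delta e f j m = dd e f j k := by
  induction k with
  | zero => rw [Finset.sum_range_one]; rfl
  | succ i ih =>
    rw [Finset.sum_range_succ, ih]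
    show dd e f j i + (dd e f j (i+1) - dd e f j i) = dd e f j (i+1)
    abel

end ForwardLemmas

/-- triangle sum swap. -/
lemma triangle_swap (t : ℕ → ℕ → E) (n : ℕ) :
    ∑ k ∈ Finset.range n, ∑ m ∈ Finset.range (k+1), t m k
      = ∑ m ∈ Finset.range n, ∑ k ∈ Finset.Ico m n, t m k := by
  induction n with
  | zero => simp
  | succ n ih =>
    rw [Finset.sum_range_succ, ih]
    have h1 : ∀ m ∈ Finset.range (n+1), ∑ k ∈ Finset.Ico m (n+1), t m k
        = ∑ k ∈ Finset.Ico m n, t m k + t m n := by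
      intro m hm
      exact Finset.sum_Ico_succ_top (Nat.lt_succ_iff.mp (Finset.mem_range.mp hm)) _
    rw [Finset.sum_congr rfl h1, Finset.sum_add_distrib]
    congr 1
    rw [Finset.sum_range_succ]
    have h2 : ∑ k ∈ Finset.Ico n n, t n k = 0 := by
      rw [Finset.Ico_self, Finset.sum_empty]
    rw [h2, add_zero]

/-- geometric bound `∑_{j∈[i,n)} 2^{-(j+1)} ≤ 2^{-i}` applied to `e`. -/
lemma geom_smul_le {e : E} (he : 0 ≤ e) (i n : ℕ) :
    ∑ j ∈ Finset.Ico i n, ((2^(j+1) : ℕ):ℝ)⁻¹ • e ≤ ((2^i : ℕ):ℝ)⁻¹ • e := by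
  rcases le_total n i with h | h
  · rw [Finset.Ico_eq_empty_of_le h, Finset.sum_empty]
    exact invSmul_nonneg (Nat.pow_pos (by norm_num)) he
  · have scalar : ∀ n', i ≤ n' → ∑ j ∈ Finset.Ico i n', (((2:ℕ)^(j+1) : ℕ):ℝ)⁻¹
        = ((2^i : ℕ):ℝ)⁻¹ - ((2^n' : ℕ):ℝ)⁻¹ := by
      intro n' hn'
      induction n' with
      | zero =>
        rw [Nat.le_zero.mp hn']
        simp
      | succ l ihl =>
        rcases Nat.lt_or_ge l i with h2 | h2
        · have : i = l + 1 := Nat.le_antisymm hn' h2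
          rw [this, Finset.Ico_self, Finset.sum_empty, sub_self]
        · rw [Finset.sum_Ico_succ_top h2, ihl h2]
          push_cast
          have h3 : ((2:ℝ))^(l+1) ≠ 0 := by positivity
          have h4 : ((2:ℝ))^l ≠ 0 := by positivity
          field_simp
          ring
    have h5 : ∑ j ∈ Finset.Ico i n, ((2^(j+1) : ℕ):ℝ)⁻¹ • e
        = (((2^i : ℕ):ℝ)⁻¹ - ((2^n : ℕ):ℝ)⁻¹) • e := by
      rw [← scalar n h, Finset.sum_smul]
    rw [h5, sub_smul]
    calc ((2^i : ℕ):ℝ)⁻¹ • e - ((2^n : ℕ):ℝ)⁻¹ • e ≤ ((2^i : ℕ):ℝ)⁻¹ • e - 0 :=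
          sub_le_sub_left (invSmul_nonneg (Nat.pow_pos (by norm_num)) he) _
    _ = ((2^i : ℕ):ℝ)⁻¹ • e := sub_zero _

end Forward

section Forward2

variable {e b : E} {f : ℕ → E}
variable (he : 0 ≤ e) (hwu : ∀ x : E, e ⊓ |x| = 0 → x = 0)
  (hf0 : ∀ n, 0 ≤ f n) (hb : ∀ n, f n ≤ b)

include he

lemma mu_nonneg (j n : ℕ) : 0 ≤ mu e f j n := by
  unfold mu
  split
  · exact sub_nonneg.mpr (DD_anti_j he (Nat.le_succ j) n)
  · exact (DD_comp he j n).1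

lemma mu_le_DD (j n : ℕ) : mu e f j n ≤ DD e f j n := by
  unfold mu
  split
  · exact sub_le_self _ (DD_comp he (j+1) n).1
  · exact le_rfl

lemma mu_comp (j n : ℕ) : IsComponent e (mu e f j n) := by
  unfold mu
  split
  · exact isComponent_diff (DD_comp he j n) (DD_comp he (j+1) n)
      (DD_anti_j he (Nat.le_succ j) n)
  · exact DD_comp he j n

lemma mu_disj_DD {j n : ℕ} (h : j + 1 < n) : mu e f j n ⊓ DD e f (j+1) n = 0 := by
  unfold mu
  rw [if_pos h]
  exact diff_disjoint (DD_comp he j n) (DD_comp he (j+1) n) (DD_anti_j he (Nat.le_succ j) n)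

lemma mu_pairwise_disj {i j n : ℕ} (hij : i < j) (hj : j < n) :
    mu e f i n ⊓ mu e f j n = 0 := by
  have h1 : mu e f j n ≤ DD e f (i+1) n :=
    le_trans (mu_le_DD he j n) (DD_anti_j he hij n)
  have h2 : mu e f i n ⊓ DD e f (i+1) n = 0 :=
    mu_disj_DD he (lt_of_le_of_lt hij hj)
  exact disjoint_of_le (mu_nonneg he i n) (mu_nonneg he j n) le_rfl h1 h2

lemma pp_comp (n : ℕ) : IsComponent e (pp e f n) := by
  have hterm : ∀ l, (0:E) ≤ qc e f l n ⊓ mu e f l n :=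
    fun l => le_inf (qc_nonneg he l n) (mu_nonneg he l n)
  apply isComponent_sum _ _ _ he
  · intro i hi j hj hij
    rcases Nat.lt_or_ge i j with h | h
    · exact disjoint_of_le (hterm i) (hterm j) inf_le_right inf_le_right
        (mu_pairwise_disj he h (Finset.mem_range.mp hj))
    · have h2 : j < i := lt_of_le_of_ne h (fun hh => hij hh.symm)
      rw [inf_comm]
      exact disjoint_of_le (hterm j) (hterm i) inf_le_right inf_le_right
        (mu_pairwise_disj he h2 (Finset.mem_range.mp hi))
  · intro j _
    exact isComponent_inf (qc_comp he j n) (mu_comp he j n)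

lemma pp_nonneg (n : ℕ) : 0 ≤ pp e f n := (pp_comp he n).1

lemma pp_le_e (n : ℕ) : pp e f n ≤ e := (pp_comp he n).2.1

lemma mu_telescope : ∀ n i : ℕ, i < n →
    ∑ j ∈ Finset.Ico i n, mu e f j n = DD e f i n := by
  intro n
  suffices h : ∀ d i : ℕ, i + d + 1 = n → ∑ j ∈ Finset.Ico i n, mu e f j n = DD e f i n by
    intro i hi
    obtain ⟨d, hd⟩ := Nat.exists_eq_add_of_lt hi
    exact h d i (by omega)
  intro d
  induction d with
  | zero =>
    intro i hi
    have hi' : i + 1 = n := by omega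
    have h1 : Finset.Ico i n = {i} := by
      ext x
      simp only [Finset.mem_Ico, Finset.mem_singleton]
      omega
    rw [h1, Finset.sum_singleton]
    unfold mu
    rw [if_neg (by omega)]
  | succ d ih =>
    intro i hi
    have hilt : i < n := by omega
    have h2 : ∑ j ∈ Finset.Ico (i+1) n, mu e f j n = DD e f (i+1) n := ih (i+1) (by omega)
    rw [Finset.sum_eq_sum_Ico_succ_bot hilt, h2]
    unfold mu
    rw [if_pos (by omega)]
    abel

include hf0 in
lemma accuracy {i M n : ℕ} (hin : i < n) (hMn : M ≤ n) :
    qc e f i n ⊓ DD e f i M ≤ pp e f n := by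
  set z := qc e f i n ⊓ DD e f i M with hz
  have hz0 : 0 ≤ z := le_inf (qc_nonneg he i n) (DD_comp he i M).1
  have h1 : z ≤ DD e f i n := le_trans inf_le_right (DD_mono_m he i hMn)
  have h2 : z = z ⊓ DD e f i n := (inf_eq_left.mpr h1).symm
  have h3 : z ≤ ∑ j ∈ Finset.Ico i n, (z ⊓ mu e f j n) := by
    calc z = z ⊓ DD e f i n := h2
    _ = z ⊓ ∑ j ∈ Finset.Ico i n, mu e f j n := by rw [mu_telescope he n i hin]
    _ ≤ ∑ j ∈ Finset.Ico i n, (z ⊓ mu e f j n) :=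
        inf_sum_le _ _ _ (fun j _ => mu_nonneg he j n) hz0
  have h4 : ∑ j ∈ Finset.Ico i n, (z ⊓ mu e f j n)
      ≤ ∑ j ∈ Finset.Ico i n, (qc e f j n ⊓ mu e f j n) := by
    apply sum_le_sum'
    intro j hj
    have hij : i ≤ j := (Finset.mem_Ico.mp hj).1
    exact inf_le_inf (le_trans inf_le_left (qc_mono_level he hf0 hij n)) le_rfl
  have h5 : ∑ j ∈ Finset.Ico i n, (qc e f j n ⊓ mu e f j n) ≤ pp e f n := by
    unfold pp
    rw [Finset.range_eq_Ico]
    apply sum_le_sum_subset' (Finset.Ico_subset_Ico (Nat.zero_le i) le_rfl)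
    intro j _
    exact le_inf (qc_nonneg he j n) (mu_nonneg he j n)
  exact le_trans h3 (le_trans h4 h5)

/-- the key density bound for a single level. -/
lemma Xbound (j n : ℕ) :
    2^(j+1) • (∑ k ∈ Finset.range n, (qc e f j k ⊓ dd e f j k)) ≤ n • e := by
  rcases Nat.eq_zero_or_pos n with rfl | hn
  · simp
  have stepA : ∀ k, qc e f j k ⊓ dd e f j k
      ≤ ∑ m ∈ Finset.range (k+1), (qc e f j k ⊓ delta e f j m) := by
    intro k
    calc qc e f j k ⊓ dd e f j k
        = qc e f j k ⊓ ∑ m ∈ Finset.range (k+1), delta e f j m := by rw [delta_sum he]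
    _ ≤ ∑ m ∈ Finset.range (k+1), (qc e f j k ⊓ delta e f j m) :=
        inf_sum_le _ _ _ (fun m _ => delta_nonneg he j m) (qc_nonneg he j k)
  have inner : ∀ m, m < n → ∑ k ∈ Finset.Ico m n, 2^(j+1) • (qc e f j k ⊓ delta e f j m)
      ≤ n • delta e f j m := by
    intro m hm
    have h1 : ∀ k, qc e f j k ⊓ delta e f j m ≤ bandProj (delta e f j m) (qc e f j k) := by
      intro k
      have := le_bandProj (delta e f j m) (qc e f j k) 1
      rwa [one_smul] at this
    have h2 : ∑ k ∈ Finset.Ico m n, 2^(j+1) • (qc e f j k ⊓ delta e f j m)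
        = 2^(j+1) • ∑ k ∈ Finset.Ico m n, (qc e f j k ⊓ delta e f j m) := by
      rw [Finset.smul_sum]
    have h3 : ∑ k ∈ Finset.Ico m n, (qc e f j k ⊓ delta e f j m)
        ≤ bandProj (delta e f j m) (∑ k ∈ Finset.Ico m n, qc e f j k) := by
      calc ∑ k ∈ Finset.Ico m n, (qc e f j k ⊓ delta e f j m)
          ≤ ∑ k ∈ Finset.Ico m n, bandProj (delta e f j m) (qc e f j k) :=
            sum_le_sum' _ _ _ fun k _ => h1 k
      _ ≤ bandProj (delta e f j m) (∑ k ∈ Finset.Ico m n, qc e f j k) :=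
            le_bandProj_sum _ _ _
    have h4 : ∑ k ∈ Finset.Ico m n, qc e f j k ≤ n • ww e f j m := by
      calc ∑ k ∈ Finset.Ico m n, qc e f j k ≤ ∑ k ∈ Finset.range n, qc e f j k := by
            rw [Finset.range_eq_Ico]
            exact sum_le_sum_subset' (Finset.Ico_subset_Ico (Nat.zero_le m) le_rfl) _
              (fun k _ => qc_nonneg he j k)
      _ = n • GG e f j n := (nsmul_GG he j hn).symm
      _ ≤ n • ww e f j m := nsmul_le_nsmul' (GG_le_ww he j (le_of_lt hm)) n
    have h5 : 2^(j+1) • (n • ww e f j m) = n • (2^(j+1) • ww e f j m) := by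
      rw [smul_smul, smul_smul, mul_comm]
    have h6 : bandProj (delta e f j m) (n • (2^(j+1) • ww e f j m))
        ≤ n • delta e f j m := by
      apply bandProj_loc (delta_comp he j m) (nsmul_nonneg' (ww_nonneg he j m) _)
      exact disjoint_of_le (delta_comp he j m).1 le_sup_right
        (delta_le_dd he j m) le_rfl (dd_disj he j m)
    calc ∑ k ∈ Finset.Ico m n, 2^(j+1) • (qc e f j k ⊓ delta e f j m)
        = 2^(j+1) • ∑ k ∈ Finset.Ico m n, (qc e f j k ⊓ delta e f j m) := h2
    _ ≤ 2^(j+1) • bandProj (delta e f j m) (∑ k ∈ Finset.Ico m n, qc e f j k) :=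
        nsmul_le_nsmul' h3 _
    _ ≤ bandProj (delta e f j m) (2^(j+1) • ∑ k ∈ Finset.Ico m n, qc e f j k) :=
        nsmul_bandProj_le _ _ _
    _ ≤ bandProj (delta e f j m) (n • (2^(j+1) • ww e f j m)) := by
        apply bandProj_mono_f
        rw [← h5]
        exact nsmul_le_nsmul' h4 _
    _ ≤ n • delta e f j m := h6
  calc 2^(j+1) • (∑ k ∈ Finset.range n, (qc e f j k ⊓ dd e f j k))
      = ∑ k ∈ Finset.range n, 2^(j+1) • (qc e f j k ⊓ dd e f j k) := Finset.smul_sum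
  _ ≤ ∑ k ∈ Finset.range n, ∑ m ∈ Finset.range (k+1), 2^(j+1) • (qc e f j k ⊓ delta e f j m) := by
      apply sum_le_sum'
      intro k _
      calc 2^(j+1) • (qc e f j k ⊓ dd e f j k)
          ≤ 2^(j+1) • ∑ m ∈ Finset.range (k+1), (qc e f j k ⊓ delta e f j m) :=
            nsmul_le_nsmul' (stepA k) _
      _ = ∑ m ∈ Finset.range (k+1), 2^(j+1) • (qc e f j k ⊓ delta e f j m) :=
            Finset.smul_sum
  _ = ∑ m ∈ Finset.range n, ∑ k ∈ Finset.Ico m n, 2^(j+1) • (qc e f j k ⊓ delta e f j m) :=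
      triangle_swap _ n
  _ ≤ ∑ m ∈ Finset.range n, n • delta e f j m :=
      sum_le_sum' _ _ _ fun m hm => inner m (Finset.mem_range.mp hm)
  _ = n • ∑ m ∈ Finset.range n, delta e f j m := (Finset.smul_sum).symm
  _ = n • dd e f j (n-1) := by
      have hds := delta_sum (e := e) (f := f) he j (n-1)
      rw [show n - 1 + 1 = n by omega] at hds
      rw [hds]
  _ ≤ n • e := nsmul_le_nsmul' (dd_comp he j (n-1)).2.1 n

/-- projection of `pp k` onto a region. -/
lemma density_proj {i M k : ℕ} (hMk : M ≤ k) (hik : i < k) :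
    bandProj (DD e f i M) (pp e f k)
      ≤ ∑ j ∈ Finset.Ico i k, (qc e f j k ⊓ dd e f j k) := by
  have hterm : ∀ l, (0:E) ≤ qc e f l k ⊓ mu e f l k :=
    fun l => le_inf (qc_nonneg he l k) (mu_nonneg he l k)
  have hzero : ∀ j, j < i → bandProj (DD e f i M) (qc e f j k ⊓ mu e f j k) = 0 := by
    intro j hj
    have h1 : mu e f j k ⊓ DD e f (j+1) k = 0 := mu_disj_DD he (by omega)
    have h2 : DD e f i M ≤ DD e f (j+1) k :=
      le_trans (DD_mono_m he i hMk) (DD_anti_j he (by omega) k)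
    have h3 : (qc e f j k ⊓ mu e f j k) ⊓ DD e f i M = 0 :=
      disjoint_of_le (hterm j) (DD_comp he i M).1 inf_le_right h2 h1
    exact bandProj_disjoint_zero (hterm j) (DD_comp he i M).1 h3
  calc bandProj (DD e f i M) (pp e f k)
      ≤ ∑ j ∈ Finset.range k, bandProj (DD e f i M) (qc e f j k ⊓ mu e f j k) :=
        bandProj_sum_le _ _ _ (fun j _ => hterm j) (DD_comp he i M).1
  _ = ∑ j ∈ Finset.Ico 0 i, bandProj (DD e f i M) (qc e f j k ⊓ mu e f j k)
      + ∑ j ∈ Finset.Ico i k, bandProj (DD e f i M) (qc e f j k ⊓ mu e f j k) := by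
      rw [Finset.range_eq_Ico, ← Finset.sum_Ico_consecutive _ (Nat.zero_le i) (le_of_lt hik)]
  _ = ∑ j ∈ Finset.Ico i k, bandProj (DD e f i M) (qc e f j k ⊓ mu e f j k) := by
      have hz : ∑ j ∈ Finset.Ico 0 i, bandProj (DD e f i M) (qc e f j k ⊓ mu e f j k) = 0 :=
        Finset.sum_eq_zero fun j hj => hzero j (Finset.mem_Ico.mp hj).2
      rw [hz, zero_add]
  _ ≤ ∑ j ∈ Finset.Ico i k, (qc e f j k ⊓ dd e f j k) := by
      apply sum_le_sum'
      intro j _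
      calc bandProj (DD e f i M) (qc e f j k ⊓ mu e f j k)
          ≤ qc e f j k ⊓ mu e f j k := bandProj_le _ _
      _ ≤ qc e f j k ⊓ dd e f j k :=
          inf_le_inf le_rfl (le_trans (mu_le_DD he j k) (DD_le_dd he le_rfl k))

end Forward2

section Forward3

variable {e b : E} {f : ℕ → E}
variable (he : 0 ≤ e) (hwu : ∀ x : E, e ⊓ |x| = 0 → x = 0)
  (hf0 : ∀ n, 0 ≤ f n) (hb : ∀ n, f n ≤ b)
  (hNA : NullSeq (fun n => (n:ℝ)⁻¹ • ∑ k ∈ Finset.range n, f k))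

include he hf0 hb hNA

lemma wwZ (j : ℕ) : ZeroFam (ww e f j) := by
  have hb0 : 0 ≤ b := le_trans (hf0 0) (hb 0)
  set A : ℕ → E := fun n => (n:ℝ)⁻¹ • ∑ k ∈ Finset.range n, f k with hA
  have hA0 : ∀ n, 0 ≤ A n := by
    intro n
    rcases Nat.eq_zero_or_pos n with rfl | hn
    · simp [hA]
    · exact invSmul_nonneg hn (sum_nonneg' _ _ fun k _ => hf0 k)
  have hAb : ∀ n, A n ≤ b := by
    intro n
    rcases Nat.eq_zero_or_pos n with rfl | hn
    · simpa [hA] using hb0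
    · show (n:ℝ)⁻¹ • ∑ k ∈ Finset.range n, f k ≤ b
      apply (invSmul_le_iff hn).mpr
      calc ∑ k ∈ Finset.range n, f k ≤ ∑ _k ∈ Finset.range n, b :=
            sum_le_sum' _ _ _ fun k _ => hb k
      _ = n • b := by rw [Finset.sum_const, Finset.card_range]
  have hGA : ∀ n, GG e f j n ≤ (j+1) • A n := by
    intro n
    rcases Nat.eq_zero_or_pos n with rfl | hn
    · simp [GG, hA]
    · show (n:ℝ)⁻¹ • ∑ k ∈ Finset.range n, qc e f j k ≤ (j+1) • A n
      have h1 : ∑ k ∈ Finset.range n, qc e f j k ≤ (j+1) • ∑ k ∈ Finset.range n, f k := by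
        rw [Finset.smul_sum]
        exact sum_le_sum' _ _ _ fun k _ => qc_cheb he hf0 j k
      calc (n:ℝ)⁻¹ • ∑ k ∈ Finset.range n, qc e f j k
          ≤ (n:ℝ)⁻¹ • ((j+1) • ∑ k ∈ Finset.range n, f k) := invSmul_mono hn h1
      _ = (j+1) • A n := by rw [invSmul_nsmul_comm]
  refine ⟨ww_antitone he j, ?_⟩
  intro x hx
  have hTA : ZeroFam (tailSup A) := nullSeq_zeroFam hAb hNA
  apply (zeroFam_nsmul hTA (j+1)).2
  intro m
  calc x ≤ ww e f j m := hx m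
  _ ≤ tailSup (fun n => (j+1) • A n) m :=
      tailSup_mono_seq (fun n => nsmul_le_nsmul' (hAb n) (j+1)) hGA m
  _ ≤ (j+1) • tailSup A m :=
      tailSup_le fun n hn => nsmul_le_nsmul' (le_tailSup hAb hn) (j+1)

lemma bigZ (i : ℕ) : ZeroFam (fun M => ∑ l ∈ Finset.range (i+1), 2^(l+1) • ww e f l M) :=
  zeroFam_sum _ _ fun l _ => zeroFam_nsmul (wwZ he hf0 hb hNA l) _

lemma DDcomplZ (i : ℕ) : ZeroFam (fun M => e - DD e f i M) := by
  refine ⟨fun M M' h => sub_le_sub_left (DD_mono_m he i h) e, ?_⟩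
  intro x hx
  apply (bigZ he hf0 hb hNA i).2
  intro M
  exact le_trans (hx M) (compl_DD_le he i M)

include hwu in
lemma pp_density_null :
    NullSeq (fun n => (n:ℝ)⁻¹ • ∑ k ∈ Finset.range n, pp e f k) := by
  set g : ℕ → E := fun n => (n:ℝ)⁻¹ • ∑ k ∈ Finset.range n, pp e f k with hgdef
  have hg0 : ∀ n, 0 ≤ g n := by
    intro n
    rcases Nat.eq_zero_or_pos n with rfl | hn
    · simp [hgdef]
    · exact invSmul_nonneg hn (sum_nonneg' _ _ fun k _ => pp_nonneg he k)
  have hge : ∀ n, g n ≤ e := by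
    intro n
    rcases Nat.eq_zero_or_pos n with rfl | hn
    · simpa [hgdef] using he
    · show (n:ℝ)⁻¹ • ∑ k ∈ Finset.range n, pp e f k ≤ e
      apply (invSmul_le_iff hn).mpr
      calc ∑ k ∈ Finset.range n, pp e f k ≤ ∑ _k ∈ Finset.range n, e :=
            sum_le_sum' _ _ _ fun k _ => pp_le_e he k
      _ = n • e := by rw [Finset.sum_const, Finset.card_range]
  intro c hc
  have key1 : ∀ i M : ℕ, c ≤ ((2^i : ℕ):ℝ)⁻¹ • e + (e - DD e f i M) := by
    intro i M
    set M' : ℕ := max M (i+1) with hM'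
    set N₀ : ℕ := max M' 1 with hN₀
    have keybound : ∀ n, N₀ ≤ n →
        g n ≤ (((2^i : ℕ):ℝ)⁻¹ • e + (e - DD e f i M)) + M' • ((n:ℝ)⁻¹ • e) := by
      intro n hn
      have hn1 : 0 < n := lt_of_lt_of_le (Nat.succ_pos 0) (le_trans (le_max_right _ _) hn)
      have hM'n : M' ≤ n := le_trans (le_max_left _ _) hn
      have hMn : M ≤ n := le_trans (le_max_left _ _) hM'n
      have hin : i < n := lt_of_lt_of_le (Nat.lt_succ_self i)
        (le_trans (le_max_right _ _) hM'n)
      have hdcomp : IsComponent e (DD e f i M) := DD_comp he i M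
      have hdec : g n = bandProj (DD e f i M) (g n) + bandProj (e - DD e f i M) (g n) :=
        (bandProj_decomp he hwu hdcomp (hg0 n)).symm
      have part2 : bandProj (e - DD e f i M) (g n) ≤ e - DD e f i M := by
        have h1 := bandProj_nsmul_e_le (isComponent_compl hdcomp) 1
        rw [one_smul, one_smul] at h1
        exact le_trans (bandProj_mono_f _ (hge n)) h1
      have part1 : bandProj (DD e f i M) (g n)
          ≤ M' • ((n:ℝ)⁻¹ • e) + ((2^i : ℕ):ℝ)⁻¹ • e := by
        have h1 : n • bandProj (DD e f i M) (g n)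
            ≤ bandProj (DD e f i M) (∑ k ∈ Finset.range n, pp e f k) := by
          calc n • bandProj (DD e f i M) (g n)
              ≤ bandProj (DD e f i M) (n • g n) := nsmul_bandProj_le _ _ _
          _ = bandProj (DD e f i M) (∑ k ∈ Finset.range n, pp e f k) := by
              rw [hgdef]
              congr 1
              exact invSmul_cancel hn1 _
        have h2 : bandProj (DD e f i M) (∑ k ∈ Finset.range n, pp e f k)
            ≤ ∑ k ∈ Finset.range n, bandProj (DD e f i M) (pp e f k) :=
          bandProj_sum_le _ _ _ (fun k _ => pp_nonneg he k) hdcomp.1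
        have h3 : ∑ k ∈ Finset.range n, bandProj (DD e f i M) (pp e f k)
            = ∑ k ∈ Finset.Ico 0 M', bandProj (DD e f i M) (pp e f k)
              + ∑ k ∈ Finset.Ico M' n, bandProj (DD e f i M) (pp e f k) := by
          rw [Finset.range_eq_Ico, ← Finset.sum_Ico_consecutive _ (Nat.zero_le M') hM'n]
        have h4 : ∑ k ∈ Finset.Ico 0 M', bandProj (DD e f i M) (pp e f k) ≤ M' • e := by
          calc ∑ k ∈ Finset.Ico 0 M', bandProj (DD e f i M) (pp e f k)
              ≤ ∑ _k ∈ Finset.Ico 0 M', e :=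
                sum_le_sum' _ _ _ fun k _ => le_trans (bandProj_le _ _) (pp_le_e he k)
          _ = M' • e := by rw [Finset.sum_const, Nat.card_Ico, Nat.sub_zero]
        have h5 : ∑ k ∈ Finset.Ico M' n, bandProj (DD e f i M) (pp e f k)
            ≤ ∑ j ∈ Finset.Ico i n, ∑ k ∈ Finset.range n, (qc e f j k ⊓ dd e f j k) := by
          have h51 : ∀ k ∈ Finset.Ico M' n, bandProj (DD e f i M) (pp e f k)
              ≤ ∑ j ∈ Finset.Ico i n, (qc e f j k ⊓ dd e f j k) := by
            intro k hk
            obtain ⟨hk1, hk2⟩ := Finset.mem_Ico.mp hk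
            have hMk : M ≤ k := le_trans (le_max_left _ _) hk1
            have hik : i < k := lt_of_lt_of_le (Nat.lt_succ_self i)
              (le_trans (le_max_right _ _) hk1)
            calc bandProj (DD e f i M) (pp e f k)
                ≤ ∑ j ∈ Finset.Ico i k, (qc e f j k ⊓ dd e f j k) :=
                  density_proj he hMk hik
            _ ≤ ∑ j ∈ Finset.Ico i n, (qc e f j k ⊓ dd e f j k) :=
                sum_le_sum_subset' (Finset.Ico_subset_Ico le_rfl (le_of_lt hk2)) _
                  (fun j _ => le_inf (qc_nonneg he j k) (dd_comp he j k).1)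
          calc ∑ k ∈ Finset.Ico M' n, bandProj (DD e f i M) (pp e f k)
              ≤ ∑ k ∈ Finset.Ico M' n, ∑ j ∈ Finset.Ico i n, (qc e f j k ⊓ dd e f j k) :=
                sum_le_sum' _ _ _ h51
          _ = ∑ j ∈ Finset.Ico i n, ∑ k ∈ Finset.Ico M' n, (qc e f j k ⊓ dd e f j k) :=
              Finset.sum_comm
          _ ≤ ∑ j ∈ Finset.Ico i n, ∑ k ∈ Finset.range n, (qc e f j k ⊓ dd e f j k) := by
              apply sum_le_sum'
              intro j _
              rw [Finset.range_eq_Ico]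
              exact sum_le_sum_subset' (Finset.Ico_subset_Ico (Nat.zero_le M') le_rfl) _
                (fun k _ => le_inf (qc_nonneg he j k) (dd_comp he j k).1)
        have h6 : n • bandProj (DD e f i M) (g n)
            ≤ M' • e + ∑ j ∈ Finset.Ico i n, ∑ k ∈ Finset.range n, (qc e f j k ⊓ dd e f j k) := by
          calc n • bandProj (DD e f i M) (g n)
              ≤ ∑ k ∈ Finset.range n, bandProj (DD e f i M) (pp e f k) := le_trans h1 h2
          _ = _ + _ := h3
          _ ≤ M' • e + ∑ j ∈ Finset.Ico i n, ∑ k ∈ Finset.range n, (qc e f j k ⊓ dd e f j k) :=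
              add_le_add h4 h5
        have h7 : bandProj (DD e f i M) (g n) ≤ (n:ℝ)⁻¹
            • (M' • e + ∑ j ∈ Finset.Ico i n, ∑ k ∈ Finset.range n, (qc e f j k ⊓ dd e f j k)) :=
          (le_invSmul_iff hn1).mpr h6
        have h8 : (n:ℝ)⁻¹
            • (M' • e + ∑ j ∈ Finset.Ico i n, ∑ k ∈ Finset.range n, (qc e f j k ⊓ dd e f j k))
            = M' • ((n:ℝ)⁻¹ • e) + ∑ j ∈ Finset.Ico i n,
                (n:ℝ)⁻¹ • ∑ k ∈ Finset.range n, (qc e f j k ⊓ dd e f j k) := by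
          rw [smul_add, invSmul_nsmul_comm, Finset.smul_sum]
        have h9 : ∀ j, (n:ℝ)⁻¹ • ∑ k ∈ Finset.range n, (qc e f j k ⊓ dd e f j k)
            ≤ ((2^(j+1) : ℕ):ℝ)⁻¹ • e := by
          intro j
          have h2pos : 0 < 2^(j+1) := Nat.pow_pos (by norm_num)
          apply (le_invSmul_iff h2pos).mpr
          have h91 : (2^(j+1)) • ((n:ℝ)⁻¹ • ∑ k ∈ Finset.range n, (qc e f j k ⊓ dd e f j k))
              = (n:ℝ)⁻¹ • (2^(j+1) • ∑ k ∈ Finset.range n, (qc e f j k ⊓ dd e f j k)) := by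
            rw [invSmul_nsmul_comm]
          rw [h91]
          calc (n:ℝ)⁻¹ • (2^(j+1) • ∑ k ∈ Finset.range n, (qc e f j k ⊓ dd e f j k))
              ≤ (n:ℝ)⁻¹ • (n • e) := invSmul_mono hn1 (Xbound he j n)
          _ = e := invSmul_cancel' hn1 e
        calc bandProj (DD e f i M) (g n)
            ≤ M' • ((n:ℝ)⁻¹ • e) + ∑ j ∈ Finset.Ico i n,
                (n:ℝ)⁻¹ • ∑ k ∈ Finset.range n, (qc e f j k ⊓ dd e f j k) := by
              rw [← h8]; exact h7
        _ ≤ M' • ((n:ℝ)⁻¹ • e) + ∑ j ∈ Finset.Ico i n, ((2^(j+1) : ℕ):ℝ)⁻¹ • e :=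
            add_le_add_right (sum_le_sum' _ _ _ fun j _ => h9 j) _
        _ ≤ M' • ((n:ℝ)⁻¹ • e) + ((2^i : ℕ):ℝ)⁻¹ • e :=
            add_le_add_right (geom_smul_le he i n) _
      calc g n = bandProj (DD e f i M) (g n) + bandProj (e - DD e f i M) (g n) := hdec
      _ ≤ (M' • ((n:ℝ)⁻¹ • e) + ((2^i : ℕ):ℝ)⁻¹ • e) + (e - DD e f i M) :=
          add_le_add part1 part2
      _ = (((2^i : ℕ):ℝ)⁻¹ • e + (e - DD e f i M)) + M' • ((n:ℝ)⁻¹ • e) := by abel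
    have hlim : c - (((2^i : ℕ):ℝ)⁻¹ • e + (e - DD e f i M)) ≤ 0 := by
      apply le_zero_of_le_nsmul_invSmul he M' N₀
      intro N hN hNpos
      rw [sub_le_iff_le_add, add_comm]
      calc c ≤ tailSup g N := hc N
      _ ≤ (((2^i : ℕ):ℝ)⁻¹ • e + (e - DD e f i M)) + M' • ((N:ℝ)⁻¹ • e) := by
          apply tailSup_le
          intro n hn
          calc g n ≤ (((2^i : ℕ):ℝ)⁻¹ • e + (e - DD e f i M)) + M' • ((n:ℝ)⁻¹ • e) :=
                keybound n (le_trans hN hn)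
          _ ≤ (((2^i : ℕ):ℝ)⁻¹ • e + (e - DD e f i M)) + M' • ((N:ℝ)⁻¹ • e) :=
              add_le_add_right (nsmul_le_nsmul' (invSmul_e_antitone hNpos hn he) M') _
    calc c = (c - (((2^i : ℕ):ℝ)⁻¹ • e + (e - DD e f i M)))
        + (((2^i : ℕ):ℝ)⁻¹ • e + (e - DD e f i M)) := by abel
    _ ≤ 0 + (((2^i : ℕ):ℝ)⁻¹ • e + (e - DD e f i M)) := add_le_add_left hlim _
    _ = ((2^i : ℕ):ℝ)⁻¹ • e + (e - DD e f i M) := by abel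
  have key2 : ∀ i : ℕ, c ≤ ((2^i : ℕ):ℝ)⁻¹ • e := by
    intro i
    apply le_of_le_add_zeroFam (DDcomplZ he hf0 hb hNA i)
    intro M
    exact key1 i M
  apply le_zero_of_le_invSmul he
  intro K hK
  calc c ≤ ((2^K : ℕ):ℝ)⁻¹ • e := key2 K
  _ ≤ (K:ℝ)⁻¹ • e := invSmul_e_antitone hK (le_of_lt (Nat.lt_two_pow_self)) he

include hwu in
lemma pp_acc_null :
    NullSeq (fun n => bandProj (e - pp e f n) (f n)) := by
  have hb0 : 0 ≤ b := le_trans (hf0 0) (hb 0)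
  set h : ℕ → E := fun n => bandProj (e - pp e f n) (f n) with hhdef
  have hh0 : ∀ n, 0 ≤ h n := fun n => bandProj_nonneg _ (hf0 n)
  have hhb : ∀ n, h n ≤ b := fun n => le_trans (bandProj_le _ _) (hb n)
  intro c hc
  have key1 : ∀ i M : ℕ, c ≤ ((i+1 : ℕ):ℝ)⁻¹ • e + bandProj (e - DD e f i M) b := by
    intro i M
    set N₀ : ℕ := max (max M (i+1)) 1 with hN₀
    have keybound : ∀ n, N₀ ≤ n →
        h n ≤ ((i+1 : ℕ):ℝ)⁻¹ • e + bandProj (e - DD e f i M) b := by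
      intro n hn
      have hMn : M ≤ n := le_trans (le_max_left _ _) (le_trans (le_max_left _ _) hn)
      have hin : i < n := lt_of_lt_of_le (Nat.lt_succ_self i)
        (le_trans (le_max_right _ _) (le_trans (le_max_left _ _) hn))
      have acc : qc e f i n ⊓ DD e f i M ≤ pp e f n := accuracy he hf0 hin hMn
      have h1 : e - pp e f n ≤ (e - qc e f i n) ⊔ (e - DD e f i M) := by
        calc e - pp e f n ≤ e - (qc e f i n ⊓ DD e f i M) := sub_le_sub_left acc e
        _ = (e - qc e f i n) ⊔ (e - DD e f i M) := compl_inf_eq e _ _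
      calc h n ≤ bandProj ((e - qc e f i n) ⊔ (e - DD e f i M)) (f n) :=
            bandProj_mono_p (f n) h1
      _ ≤ bandProj (e - qc e f i n) (f n) + bandProj (e - DD e f i M) (f n) :=
          bandProj_sup_le (hf0 n) (sub_nonneg.mpr (qc_le_e he i n))
            (sub_nonneg.mpr (DD_comp he i M).2.1)
      _ ≤ ((i+1 : ℕ):ℝ)⁻¹ • e + bandProj (e - DD e f i M) b :=
          add_le_add (qc_cut he hf0 i n) (bandProj_mono_f _ (hb n))
    calc c ≤ tailSup h N₀ := hc N₀
    _ ≤ ((i+1 : ℕ):ℝ)⁻¹ • e + bandProj (e - DD e f i M) b := tailSup_le keybound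
  have key2 : ∀ i : ℕ, c ≤ ((i+1 : ℕ):ℝ)⁻¹ • e := by
    intro i
    have hfamZ : ZeroFam (fun M => bandProj (e - DD e f i M) b) := by
      refine ⟨fun M M' hMM' => bandProj_mono_p b (sub_le_sub_left (DD_mono_m he i hMM') e), ?_⟩
      intro x hx
      have est : ∀ t M : ℕ, bandProj (e - DD e f i M) b
          ≤ t • (∑ l ∈ Finset.range (i+1), 2^(l+1) • ww e f l M) + ((b - t • e) ⊔ 0) := by
        intro t M
        have hcomp : IsComponent e (e - DD e f i M) := isComponent_compl (DD_comp he i M)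
        calc bandProj (e - DD e f i M) b
            ≤ bandProj (e - DD e f i M) (b ⊓ (t • e))
              + bandProj (e - DD e f i M) ((b - t • e) ⊔ 0) := by
              conv_lhs => rw [cut_decomp b (t • e)]
              exact bandProj_subadd (le_inf hb0 (nsmul_nonneg' he t)) le_sup_right hcomp.1
        _ ≤ bandProj (e - DD e f i M) (t • e) + ((b - t • e) ⊔ 0) :=
            add_le_add (bandProj_mono_f _ inf_le_right) (bandProj_le _ _)
        _ ≤ t • (e - DD e f i M) + ((b - t • e) ⊔ 0) :=
            add_le_add_left (bandProj_nsmul_e_le hcomp t) _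
        _ ≤ t • (∑ l ∈ Finset.range (i+1), 2^(l+1) • ww e f l M) + ((b - t • e) ⊔ 0) :=
            add_le_add_left (nsmul_le_nsmul' (compl_DD_le he i M) t) _
      have step : ∀ t : ℕ, x ≤ (b - t • e) ⊔ 0 := by
        intro t
        apply le_of_le_add_zeroFam (zeroFam_nsmul (bigZ he hf0 hb hNA i) t)
        intro M
        calc x ≤ bandProj (e - DD e f i M) b := hx M
        _ ≤ t • (∑ l ∈ Finset.range (i+1), 2^(l+1) • ww e f l M) + ((b - t • e) ⊔ 0) :=
            est t M
        _ = ((b - t • e) ⊔ 0) + t • (∑ l ∈ Finset.range (i+1), 2^(l+1) • ww e f l M) := by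
            abel
      exact le_zero_of_le_excess he hwu hb0 step
    apply le_of_le_add_zeroFam hfamZ
    intro M
    exact key1 i M
  apply le_zero_of_le_invSmul he
  intro K hK
  have := key2 (K-1)
  rwa [show (K-1)+1 = K by omega] at this

end Forward3

end KVN
/-- Koopman–von Neumann in Riesz spaces: for an order bounded sequence
`(f_n)` in `E₊`, the Cesàro averages order converge to `0` iff there is a density zero
sequence `(p_n)` of components of `e` with `(e - p_n)·f_n → 0` in order, where
multiplication by the component `e - p_n` is the associated band projection. -/
theorem koopman_von_neumann
    {E : Type*} [ConditionallyCompleteLattice E] [AddCommGroup E] [Module ℝ E]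
    [CovariantClass E E (· + ·) (· ≤ ·)]
    (e : E) (he : 0 < e) (hwu : ∀ x : E, e ⊓ |x| = 0 → x = 0)
    (f : ℕ → E) (hf0 : ∀ n, 0 ≤ f n) (hbdd : ∃ b : E, ∀ n, f n ≤ b) :
    OrderConvergesTo (fun n => (n : ℝ)⁻¹ • ∑ k ∈ Finset.range n, f k) (0 : E) ↔
      ∃ p : ℕ → E, (∀ n, IsComponent e (p n)) ∧ DensityZero p ∧
        OrderConvergesTo (fun n => bandProj (e - p n) (f n)) (0 : E) := by
  classical
  obtain ⟨b, hb⟩ := hbdd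
  have he0 : 0 ≤ e := he.le
  have hb0 : 0 ≤ b := le_trans (hf0 0) (hb 0)
  constructor
  · intro hA
    have hA0 : ∀ n : ℕ, 0 ≤ (n : ℝ)⁻¹ • ∑ k ∈ Finset.range n, f k := by
      intro n
      rcases Nat.eq_zero_or_pos n with rfl | hn
      · simp
      · exact KVN.invSmul_nonneg hn (KVN.sum_nonneg' _ _ fun k _ => hf0 k)
    have hAb : ∀ n : ℕ, (n : ℝ)⁻¹ • ∑ k ∈ Finset.range n, f k ≤ b := by
      intro n
      rcases Nat.eq_zero_or_pos n with rfl | hn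
      · simpa using hb0
      · apply (KVN.invSmul_le_iff hn).mpr
        calc ∑ k ∈ Finset.range n, f k ≤ ∑ _k ∈ Finset.range n, b :=
              KVN.sum_le_sum' _ _ _ fun k _ => hb k
        _ = n • b := by rw [Finset.sum_const, Finset.card_range]
    have hNA : KVN.NullSeq (fun n => (n:ℝ)⁻¹ • ∑ k ∈ Finset.range n, f k) :=
      KVN.nullSeq_of_orderConv hA0 hAb hA
    refine ⟨KVN.pp e f, fun n => KVN.pp_comp he0 n, ?_, ?_⟩
    · show OrderConvergesTo (fun n => (n : ℝ)⁻¹ • ∑ k ∈ Finset.range n, KVN.pp e f k) 0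
      have hg0 : ∀ n : ℕ, 0 ≤ (n : ℝ)⁻¹ • ∑ k ∈ Finset.range n, KVN.pp e f k := by
        intro n
        rcases Nat.eq_zero_or_pos n with rfl | hn
        · simp
        · exact KVN.invSmul_nonneg hn (KVN.sum_nonneg' _ _ fun k _ => KVN.pp_nonneg he0 k)
      have hge : ∀ n : ℕ, (n : ℝ)⁻¹ • ∑ k ∈ Finset.range n, KVN.pp e f k ≤ e := by
        intro n
        rcases Nat.eq_zero_or_pos n with rfl | hn
        · simpa using he0
        · apply (KVN.invSmul_le_iff hn).mpr
          calc ∑ k ∈ Finset.range n, KVN.pp e f k ≤ ∑ _k ∈ Finset.range n, e :=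
                KVN.sum_le_sum' _ _ _ fun k _ => KVN.pp_le_e he0 k
          _ = n • e := by rw [Finset.sum_const, Finset.card_range]
      exact KVN.orderConv_of_nullSeq hg0 hge
        (KVN.pp_density_null he0 hwu hf0 hb hNA)
    · have hh0 : ∀ n, 0 ≤ bandProj (e - KVN.pp e f n) (f n) :=
        fun n => KVN.bandProj_nonneg _ (hf0 n)
      have hhb : ∀ n, bandProj (e - KVN.pp e f n) (f n) ≤ b :=
        fun n => le_trans (KVN.bandProj_le _ _) (hb n)
      exact KVN.orderConv_of_nullSeq hh0 hhb
        (KVN.pp_acc_null he0 hwu hf0 hb hNA)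
  · rintro ⟨p, hp, hdz, hoc⟩
    exact KVN.kvn_backward he0 hwu hf0 hb p hp hdz hoc
end

section
/- Let (E, T, S, e) be a conditional expectation preserving system. Then T S f = T f for all f ∈ E (not just for components of e). -/
open Finset

set_option linter.unusedSectionVars false
set_option linter.unnecessarySimpa false

section Inst
variable {E : Type*} [ConditionallyCompleteLattice E] [AddCommGroup E]
  [CovariantClass E E (· + ·) (· ≤ ·)]

private instance (priority := 10) : IsOrderedAddMonoid E :=
  { add_le_add_left := fun a b hab c => by
      rw [add_comm a c, add_comm b c]; exact CovariantClass.elim c hab }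

end Inst

section Aux

variable {E : Type*} [ConditionallyCompleteLattice E] [AddCommGroup E] [Module ℝ E]
  [CovariantClass E E (· + ·) (· ≤ ·)]

private lemma arch_le' {x c : E} (h : ∀ n : ℕ, n • x ≤ c) : x ≤ 0 := by
  have hne : (Set.range fun n : ℕ => n • x).Nonempty := ⟨0 • x, ⟨0, rfl⟩⟩
  have hbdd : BddAbove (Set.range fun n : ℕ => n • x) :=
    ⟨c, by rintro _ ⟨n, rfl⟩; exact h n⟩
  have hlub := isLUB_csSup hne hbdd
  set s := sSup (Set.range fun n : ℕ => n • x) with hs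
  have hub : s ≤ s - x := by
    refine hlub.2 ?_
    rintro _ ⟨n, rfl⟩
    have h1 : (n + 1) • x ≤ s := hlub.1 ⟨n + 1, rfl⟩
    rw [succ_nsmul] at h1
    exact le_sub_iff_add_le.2 h1
  have h2 : s + x ≤ s := le_sub_iff_add_le.1 hub
  exact (add_le_iff_nonpos_right s).1 h2

private lemma inf_add_le' {a b c : E} (ha : 0 ≤ a) (hb : 0 ≤ b) (hc : 0 ≤ c) :
    a ⊓ (b + c) ≤ a ⊓ b + a ⊓ c := by
  have key : a ⊓ (b + c) - a ⊓ b ≤ a ⊓ c := by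
    rw [sub_eq_add_neg, neg_inf, add_sup]
    refine sup_le ?_ ?_
    · have h1 : a ⊓ (b + c) + -a ≤ 0 := by
        rw [← sub_eq_add_neg, sub_nonpos]; exact inf_le_left
      exact h1.trans (le_inf ha hc)
    · rw [← sub_eq_add_neg]
      refine le_inf ?_ ?_
      · rw [sub_le_iff_le_add]
        exact inf_le_left.trans (le_add_of_nonneg_right hb)
      · rw [sub_le_iff_le_add, add_comm]
        exact inf_le_right
  exact sub_le_iff_le_add'.1 key

private lemma inf_nsmul_le' {a b : E} (ha : 0 ≤ a) (hb : 0 ≤ b) (n : ℕ) :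
    a ⊓ n • b ≤ n • (a ⊓ b) := by
  induction n with
  | zero => simpa using inf_le_right
  | succ n ih =>
    rw [succ_nsmul, succ_nsmul]
    calc a ⊓ (n • b + b) ≤ a ⊓ (n • b) + a ⊓ b :=
          inf_add_le' ha (nsmul_nonneg hb n) hb
      _ ≤ n • (a ⊓ b) + a ⊓ b := add_le_add_left ih _

private lemma inf_isLUB_le' {S : Set E} {s a : E} (hlub : IsLUB S s)
    (h : ∀ x ∈ S, a ⊓ x ≤ 0) : a ⊓ s ≤ 0 := by
  have hub : s ≤ a ⊔ s - a := by
    refine hlub.2 ?_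
    intro x hx
    have h1 : a ⊓ x + (a ⊔ x) = a + x := inf_add_sup a x
    have h2 : a ⊔ x ≤ a ⊔ s := sup_le_sup_left (hlub.1 hx) a
    have h3 : a ⊓ x ≤ 0 := h x hx
    rw [le_sub_iff_add_le]
    calc x + a = a ⊓ x + (a ⊔ x) := by rw [add_comm]; exact h1.symm
      _ ≤ 0 + (a ⊔ s) := add_le_add h3 h2
      _ = a ⊔ s := zero_add _
  have h4 : a ⊓ s = a + s - (a ⊔ s) := eq_sub_of_add_eq (inf_add_sup a s)
  rw [h4, sub_nonpos, add_comm]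
  exact le_sub_iff_add_le.1 hub


/-- The component of `e` in the band generated by `g` (natural-scalar version). -/
noncomputable def ncomp (e g : E) : E := sSup (Set.range fun m : ℕ => e ⊓ m • g)

variable {e g : E}

private lemma ncomp_isLUB : IsLUB (Set.range fun m : ℕ => e ⊓ m • g) (ncomp e g) :=
  isLUB_csSup ⟨e ⊓ 0 • g, ⟨0, rfl⟩⟩ ⟨e, by rintro _ ⟨m, rfl⟩; exact inf_le_left⟩

private lemma ncomp_le : ncomp e g ≤ e :=
  csSup_le ⟨e ⊓ 0 • g, ⟨0, rfl⟩⟩ (by rintro _ ⟨m, rfl⟩; exact inf_le_left)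

private lemma ncomp_nonneg (he : 0 ≤ e) : 0 ≤ ncomp e g := by
  have h0 : e ⊓ (0:ℕ) • g = 0 := by rw [zero_nsmul]; exact inf_eq_right.2 he
  have h1 := (ncomp_isLUB (e := e) (g := g)).1 ⟨0, rfl⟩
  simp only [] at h1
  rw [h0] at h1
  exact h1

private lemma ncomp_disj (he : 0 ≤ e) (hg : 0 ≤ g) {x : E} (hx : 0 ≤ x)
    (hxg : x ⊓ g = 0) : x ⊓ ncomp e g = 0 := by
  refine le_antisymm ?_ (le_inf hx (ncomp_nonneg he))
  refine inf_isLUB_le' ncomp_isLUB ?_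
  rintro _ ⟨m, rfl⟩
  calc x ⊓ (e ⊓ m • g) ≤ x ⊓ m • g := inf_le_inf_left x inf_le_right
    _ ≤ m • (x ⊓ g) := inf_nsmul_le' hx hg m
    _ = 0 := by rw [hxg, smul_zero]

private lemma sub_ncomp_disj (he : 0 ≤ e) (hg : 0 ≤ g) : (e - ncomp e g) ⊓ g = 0 := by
  set q := ncomp e g with hq
  set d := (e - q) ⊓ g with hd
  have hd0 : 0 ≤ d := le_inf (sub_nonneg.2 ncomp_le) hg
  have key : ∀ m : ℕ, m • d ≤ e ⊓ m • g := by
    intro m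
    induction m with
    | zero => simpa using le_inf he le_rfl
    | succ m ih =>
      rw [succ_nsmul, succ_nsmul]
      refine le_inf ?_ ?_
      · calc m • d + d ≤ e ⊓ m • g + d := add_le_add_left ih d
          _ ≤ q + (e - q) := add_le_add (ncomp_isLUB.1 ⟨m, rfl⟩) inf_le_left
          _ = e := by abel
      · exact add_le_add (ih.trans inf_le_right) inf_le_right
  have hle : d ≤ 0 := arch_le' (c := e) fun m => (key m).trans inf_le_left
  exact le_antisymm hle hd0

private lemma ncomp_inf_compl (he : 0 ≤ e) (hg : 0 ≤ g) :
    ncomp e g ⊓ (e - ncomp e g) = 0 := by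
  rw [inf_comm]
  exact ncomp_disj he hg (sub_nonneg.2 ncomp_le) (sub_ncomp_disj he hg)

private lemma le_ncomp_nsmul (he : 0 ≤ e) (hg : 0 ≤ g) {c : ℕ} (hgc : g ≤ c • e) :
    g ≤ c • ncomp e g := by
  set q := ncomp e g with hq
  set w := (g - c • q) ⊔ 0 with hw
  have hw1 : w ≤ g := sup_le (sub_le_self g (nsmul_nonneg (ncomp_nonneg he) c)) hg
  have hw2 : w ≤ c • (e - q) := by
    refine sup_le ?_ (nsmul_nonneg (sub_nonneg.2 ncomp_le) c)
    rw [nsmul_sub]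
    exact sub_le_sub_right hgc _
  have hw3 : w ≤ 0 := by
    calc w ≤ g ⊓ c • (e - q) := le_inf hw1 hw2
      _ ≤ c • (g ⊓ (e - q)) := inf_nsmul_le' hg (sub_nonneg.2 ncomp_le) c
      _ = 0 := by rw [inf_comm, sub_ncomp_disj he hg, smul_zero]
  have : g - c • q ≤ 0 := le_sup_left.trans hw3
  exact sub_nonpos.1 this

private lemma ncomp_nsmul_le (he : 0 ≤ e) {v : E} (hv : 0 ≤ v) (k : ℕ) :
    k • ncomp e ((v - k • e) ⊔ 0) ≤ v := by
  set g := (v - k • e) ⊔ 0 with hgdef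
  have hg : 0 ≤ g := le_sup_right
  set q := ncomp e g with hq
  set h := (k • q - v) ⊔ 0 with hhdef
  have hh0 : 0 ≤ h := le_sup_right
  have hh1 : h ≤ k • q := sup_le (sub_le_self _ hv) (nsmul_nonneg (ncomp_nonneg he) k)
  have hh2 : h ≤ (k • e - v) ⊔ 0 :=
    sup_le (le_sup_of_le_left (sub_le_sub_right (nsmul_le_nsmul_right ncomp_le k) v)) le_sup_right
  have hdisj : ((k • e - v) ⊔ 0) ⊓ g = 0 := by
    have h1 : (k • e - v) ⊔ 0 = -(v - k • e) ⊔ 0 := by rw [neg_sub]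
    have h2 := posPart_inf_negPart_eq_zero (v - k • e)
    rw [posPart_def, negPart_def] at h2
    rw [h1, hgdef, inf_comm]
    exact h2
  have hhg : h ⊓ g = 0 :=
    le_antisymm ((inf_le_inf_right g hh2).trans hdisj.le) (le_inf hh0 hg)
  have hhq : h ⊓ q = 0 := ncomp_disj he hg hh0 hhg
  have hzero : h ≤ 0 := by
    calc h = h ⊓ k • q := (inf_eq_left.2 hh1).symm
      _ ≤ k • (h ⊓ q) := inf_nsmul_le' hh0 (ncomp_nonneg he) k
      _ = 0 := by rw [hhq, smul_zero]
  have : k • q - v ≤ 0 := le_sup_left.trans hzero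
  exact sub_nonpos.1 this

end Aux


section MainAux

variable {E : Type*} [ConditionallyCompleteLattice E] [AddCommGroup E] [Module ℝ E]
  [CovariantClass E E (· + ·) (· ≤ ·)] (A : PreCEPS E)

private lemma S_mono' {x y : E} (hxy : x ≤ y) : A.S x ≤ A.S y := by
  have h1 : A.S y = A.S x ⊔ A.S y := by rw [← A.S_sup, sup_eq_right.2 hxy]
  rw [h1]; exact le_sup_left

private lemma T_mono' {x y : E} (hxy : x ≤ y) : A.T x ≤ A.T y := by
  have h1 := A.T_pos (y - x) (sub_nonneg.2 hxy)
  rw [map_sub, sub_nonneg] at h1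
  exact h1

private lemma S_inf' (x y : E) : A.S (x ⊓ y) = A.S x ⊓ A.S y := by
  have h1 : x ⊓ y = x + y - x ⊔ y := eq_sub_of_add_eq (inf_add_sup x y)
  rw [h1, map_sub, map_add, A.S_sup]
  exact (eq_sub_of_add_eq (inf_add_sup _ _)).symm

private lemma TS_eq_T_of_le_nsmul
    (h : ∀ p : E, IsComponent A.e p → A.T (A.S p) = A.T p)
    {f : E} (hf : 0 ≤ f) {K : ℕ} (hfK : f ≤ K • A.e) : A.T (A.S f) = A.T f := by
  have he : (0:E) ≤ A.e := A.e_pos.le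
  have key : ∀ N : ℕ, N • (A.T (A.S f) - A.T f) ≤ A.e ∧
      N • (A.T f - A.T (A.S f)) ≤ A.e := by
    intro N
    set v : E := N • f with hvdef
    have hv : 0 ≤ v := nsmul_nonneg hf N
    set M := N * K with hMdef
    have hvM : v ≤ M • A.e := by
      have h1 : (N * K) • A.e = N • (K • A.e) := by rw [mul_comm]; exact mul_nsmul A.e K N
      rw [hvdef, hMdef, h1]
      exact nsmul_le_nsmul_right hfK N
    set g : ℕ → E := fun k => (v - k • A.e) ⊔ 0 with hgdef
    set q : ℕ → E := fun k => ncomp A.e (g k) with hqdef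
    have hgpos : ∀ k, 0 ≤ g k := fun k => le_sup_right
    have hq0 : ∀ k, 0 ≤ q k := fun k => ncomp_nonneg he
    have hqe : ∀ k, q k ≤ A.e := fun k => ncomp_le
    have hqc : ∀ k, q k ⊓ (A.e - q k) = 0 := fun k => ncomp_inf_compl he (hgpos k)
    have claimU : ∀ j, j ≤ M → v ≤ (M - j) • A.e + ∑ k ∈ Ico (M - j) M, q k := by
      intro j
      induction j with
      | zero => intro _; simpa using hvM
      | succ j ih =>
        intro hj
        have hjM : j ≤ M := Nat.le_of_succ_le hj
        have ihv := ih hjM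
        set m := M - (j + 1) with hm
        have hmj : M - j = m + 1 := by omega
        have hmM : m < M := by omega
        rw [hmj] at ihv
        rw [Finset.sum_eq_sum_Ico_succ_bot hmM]
        set R := ∑ k ∈ Ico (m + 1) M, q k with hR
        have hR0 : 0 ≤ R := hR ▸ Finset.sum_nonneg fun k _ => hq0 k
        set d := v - (m • A.e + (q m + R)) with hd
        have hb1 : d ≤ (M - m) • q m := by
          have h1 : d ≤ v - m • A.e := by
            rw [hd]
            have h2 : v - (m • A.e + (q m + R)) = v - m • A.e - (q m + R) := by abel
            rw [h2]
            exact sub_le_self _ (add_nonneg (hq0 m) hR0)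
          have h2 : v - m • A.e ≤ g m := le_sup_left
          have h3 : g m ≤ (M - m) • q m := by
            refine le_ncomp_nsmul he (hgpos m) ?_
            refine sup_le ?_ (nsmul_nonneg he _)
            rw [sub_nsmul A.e hmM.le, ← sub_eq_add_neg]
            exact sub_le_sub_right hvM _
          exact h1.trans (h2.trans h3)
        have hb2 : d ≤ A.e - q m := by
          have h4 : v - ((m + 1) • A.e + R) ≤ 0 := sub_nonpos.2 ihv
          have h5 : d = (v - ((m + 1) • A.e + R)) + (A.e - q m) := by
            rw [hd, succ_nsmul]; abel
          rw [h5]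
          calc (v - ((m + 1) • A.e + R)) + (A.e - q m) ≤ 0 + (A.e - q m) :=
                add_le_add_left h4 _
            _ = A.e - q m := zero_add _
        have hd0 : d ≤ 0 := by
          have h5 : d ⊔ 0 ≤ (A.e - q m) ⊓ ((M - m) • q m) :=
            le_inf (sup_le hb2 (sub_nonneg.2 (hqe m))) (sup_le hb1 (nsmul_nonneg (hq0 m) _))
          have h6 : (A.e - q m) ⊓ ((M - m) • q m) ≤ (M - m) • ((A.e - q m) ⊓ q m) :=
            inf_nsmul_le' (sub_nonneg.2 (hqe m)) (hq0 m) _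
          have h7 : (A.e - q m) ⊓ q m = 0 := by rw [inf_comm]; exact hqc m
          calc d ≤ d ⊔ 0 := le_sup_left
            _ ≤ (M - m) • ((A.e - q m) ⊓ q m) := h5.trans h6
            _ = 0 := by rw [h7, smul_zero]
        rw [hd, sub_nonpos] at hd0
        exact hd0
    have claimL : ∀ m : ℕ, ∑ k ∈ range m, q (k + 1) ≤ v ⊓ m • A.e := by
      intro m
      induction m with
      | zero => simpa using le_inf hv le_rfl
      | succ m ih =>
        rw [Finset.sum_range_succ]
        set B := ∑ k ∈ range m, q (k + 1) with hB
        set d := B + q (m + 1) - v ⊓ (m + 1) • A.e with hd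
        have hstep : v ⊓ m • A.e ≤ v ⊓ (m + 1) • A.e := by
          refine inf_le_inf_left v ?_
          rw [succ_nsmul]
          exact le_add_of_nonneg_right he
        have hb1 : d ≤ q (m + 1) := by
          have h1 := add_le_add_left (ih.trans hstep) (q (m + 1))
          rw [hd]
          calc B + q (m + 1) - v ⊓ (m + 1) • A.e
              ≤ (v ⊓ (m + 1) • A.e + q (m + 1)) - v ⊓ (m + 1) • A.e :=
                sub_le_sub_right h1 _
            _ = q (m + 1) := by abel
        have hlow : (m + 1) • q (m + 1) ≤ v ⊓ (m + 1) • A.e :=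
          le_inf (ncomp_nsmul_le he hv (m + 1)) (nsmul_le_nsmul_right (hqe _) (m + 1))
        have hb2 : d ≤ m • (A.e - q (m + 1)) := by
          have h1 : d ≤ B + q (m + 1) - (m + 1) • q (m + 1) := by
            rw [hd]; exact sub_le_sub_left hlow _
          have h2 : B + q (m + 1) - (m + 1) • q (m + 1) = B - m • q (m + 1) := by
            rw [succ_nsmul]; abel
          have h3 : B - m • q (m + 1) ≤ m • A.e - m • q (m + 1) :=
            sub_le_sub_right (ih.trans inf_le_right) _
          rw [nsmul_sub]
          exact h1.trans (h2 ▸ h3)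
        have hd0 : d ≤ 0 := by
          have h5 : d ⊔ 0 ≤ q (m + 1) ⊓ (m • (A.e - q (m + 1))) :=
            le_inf (sup_le hb1 (hq0 _)) (sup_le hb2 (nsmul_nonneg (sub_nonneg.2 (hqe _)) _))
          have h6 : q (m + 1) ⊓ (m • (A.e - q (m + 1))) ≤
              m • (q (m + 1) ⊓ (A.e - q (m + 1))) :=
            inf_nsmul_le' (hq0 _) (sub_nonneg.2 (hqe _)) _
          calc d ≤ d ⊔ 0 := le_sup_left
            _ ≤ m • (q (m + 1) ⊓ (A.e - q (m + 1))) := h5.trans h6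
            _ = 0 := by rw [hqc, smul_zero]
        rw [hd, sub_nonpos] at hd0
        exact hd0
    set s := ∑ k ∈ range M, q (k + 1) with hs
    have hsv : s ≤ v := (claimL M).trans inf_le_left
    have hvs : v ≤ A.e + s := by
      have h1 : v ≤ ∑ k ∈ range M, q k := by
        have h2 := claimU M le_rfl
        rw [Nat.sub_self, zero_nsmul, zero_add, ← Finset.range_eq_Ico] at h2
        exact h2
      have h2 : ∑ k ∈ range M, q k + q M = s + q 0 := by
        rw [← Finset.sum_range_succ, Finset.sum_range_succ']
      have h3 : ∑ k ∈ range M, q k = s + q 0 - q M := eq_sub_of_add_eq h2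
      calc v ≤ ∑ k ∈ range M, q k := h1
        _ = s + q 0 - q M := h3
        _ ≤ s + q 0 := sub_le_self _ (hq0 M)
        _ ≤ s + A.e := add_le_add_right (hqe 0) s
        _ = A.e + s := add_comm _ _
    have hTq : ∀ k, A.T (A.S (q k)) = A.T (q k) :=
      fun k => h (q k) ⟨hq0 k, hqe k, hqc k⟩
    have hTSs : A.T (A.S s) = A.T s := by
      calc A.T (A.S s) = ∑ k ∈ range M, A.T (A.S (q (k + 1))) := by
            rw [hs, map_sum, map_sum]
        _ = ∑ k ∈ range M, A.T (q (k + 1)) := Finset.sum_congr rfl fun k _ => hTq _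
        _ = A.T s := by rw [hs, map_sum]
    set w := v - s with hw
    have hw0 : 0 ≤ w := sub_nonneg.2 hsv
    have hwe : w ≤ A.e := by
      rw [hw]
      calc v - s ≤ (A.e + s) - s := sub_le_sub_right hvs _
        _ = A.e := by abel
    have hTw : 0 ≤ A.T w := A.T_pos w hw0
    have hTwe : A.T w ≤ A.e := by
      have := T_mono' A hwe
      rw [A.T_e] at this; exact this
    have hSw0 : 0 ≤ A.S w := by
      have := S_mono' A hw0
      rw [map_zero] at this; exact this
    have hTSw0 : 0 ≤ A.T (A.S w) := A.T_pos _ hSw0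
    have hTSwe : A.T (A.S w) ≤ A.e := by
      have h1 := S_mono' A hwe
      rw [A.S_e] at h1
      have h2 := T_mono' A h1
      rw [A.T_e] at h2; exact h2
    have hND : N • (A.T (A.S f) - A.T f) = A.T (A.S w) - A.T w := by
      calc N • (A.T (A.S f) - A.T f)
          = A.T (A.S (N • f)) - A.T (N • f) := by
            rw [nsmul_sub, map_nsmul, map_nsmul, map_nsmul]
        _ = A.T (A.S (w + s)) - A.T (w + s) := by
            rw [← hvdef, hw, sub_add_cancel]
        _ = (A.T (A.S w) + A.T (A.S s)) - (A.T w + A.T s) := by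
            rw [map_add, map_add, map_add]
        _ = A.T (A.S w) - A.T w := by rw [hTSs]; abel
    constructor
    · rw [hND]
      calc A.T (A.S w) - A.T w ≤ A.T (A.S w) - 0 := sub_le_sub_left hTw _
        _ = A.T (A.S w) := sub_zero _
        _ ≤ A.e := hTSwe
    · have hND' : N • (A.T f - A.T (A.S f)) = A.T w - A.T (A.S w) := by
        calc N • (A.T f - A.T (A.S f))
            = N • (-(A.T (A.S f) - A.T f)) := by rw [neg_sub]
          _ = -(N • (A.T (A.S f) - A.T f)) := neg_nsmul _ _
          _ = -(A.T (A.S w) - A.T w) := by rw [hND]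
          _ = A.T w - A.T (A.S w) := neg_sub _ _
      rw [hND']
      calc A.T w - A.T (A.S w) ≤ A.T w - 0 := sub_le_sub_left hTSw0 _
        _ = A.T w := sub_zero _
        _ ≤ A.e := hTwe
  have hD1 : A.T (A.S f) - A.T f ≤ 0 := arch_le' (c := A.e) fun n => (key n).1
  have hD2 : A.T f - A.T (A.S f) ≤ 0 := arch_le' (c := A.e) fun n => (key n).2
  exact le_antisymm (sub_nonpos.1 hD1) (sub_nonpos.1 hD2)

end MainAux


section Final

variable {E : Type*} [ConditionallyCompleteLattice E] [AddCommGroup E] [Module ℝ E]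
  [CovariantClass E E (· + ·) (· ≤ ·)] (A : PreCEPS E)

private lemma isLUB_inf_nsmul_unit {f : E} (hf : 0 ≤ f) :
    IsLUB (Set.range fun n : ℕ => f ⊓ n • A.e) f := by
  have he : (0:E) ≤ A.e := A.e_pos.le
  have hne : (Set.range fun n : ℕ => f ⊓ n • A.e).Nonempty := ⟨_, ⟨0, rfl⟩⟩
  have hbdd : BddAbove (Set.range fun n : ℕ => f ⊓ n • A.e) :=
    ⟨f, by rintro _ ⟨n, rfl⟩; exact inf_le_left⟩
  have hlub := isLUB_csSup hne hbdd
  set gsup := sSup (Set.range fun n : ℕ => f ⊓ n • A.e) with hg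
  have hgf : gsup ≤ f := csSup_le hne (by rintro _ ⟨n, rfl⟩; exact inf_le_left)
  set d := (f - gsup) ⊓ A.e with hd
  have hd0 : 0 ≤ d := le_inf (sub_nonneg.2 hgf) he
  have claim : ∀ n : ℕ, n • d ≤ f ⊓ n • A.e := by
    intro n
    induction n with
    | zero => simpa using le_inf hf le_rfl
    | succ n ih =>
      rw [succ_nsmul, succ_nsmul]
      refine le_inf ?_ (add_le_add (ih.trans inf_le_right) inf_le_right)
      calc n • d + d ≤ f ⊓ n • A.e + d := add_le_add_left ih d
        _ ≤ gsup + (f - gsup) := add_le_add (hlub.1 ⟨n, rfl⟩) inf_le_left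
        _ = f := by abel
  have hdle : d ≤ 0 := arch_le' (c := f) fun n => (claim n).trans inf_le_left
  have hdeq : d = 0 := le_antisymm hdle hd0
  have hfg : f - gsup = 0 := by
    refine A.weakUnit (f - gsup) ?_
    rw [abs_of_nonneg (sub_nonneg.2 hgf), inf_comm]
    rw [hd] at hdeq
    exact hdeq
  have hfeq : f = gsup := by
    have := sub_eq_zero.1 hfg
    exact this
  rwa [← hfeq] at hlub

end Final

private theorem TS_eq_T_of_components_aux
    {E : Type*} [ConditionallyCompleteLattice E] [AddCommGroup E] [Module ℝ E]
    [CovariantClass E E (· + ·) (· ≤ ·)]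
    (A : PreCEPS E)
    (h : ∀ p : E, IsComponent A.e p → A.T (A.S p) = A.T p) :
    ∀ f : E, A.T (A.S f) = A.T f := by
  have he : (0:E) ≤ A.e := A.e_pos.le
  have key : ∀ f : E, 0 ≤ f → A.T (A.S f) = A.T f := by
    intro f hf
    have h1 : IsLUB (Set.range fun n : ℕ => f ⊓ n • A.e) f := isLUB_inf_nsmul_unit A hf
    have hSf : 0 ≤ A.S f := by
      have h2 := S_mono' A hf; rw [map_zero] at h2; exact h2
    have h2 : IsLUB (Set.range fun n : ℕ => A.S f ⊓ n • A.e) (A.S f) :=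
      isLUB_inf_nsmul_unit A hSf
    have hmono : ∀ {x : E}, Monotone fun n : ℕ => x ⊓ n • A.e := by
      intro x a b hab
      exact inf_le_inf_left x (nsmul_le_nsmul_left he hab)
    have hdir : ∀ x : E, DirectedOn (· ≤ ·) (Set.range fun n : ℕ => x ⊓ n • A.e) := by
      intro x
      rintro _ ⟨n, rfl⟩ _ ⟨m, rfl⟩
      exact ⟨x ⊓ (max n m) • A.e, ⟨max n m, rfl⟩, hmono (le_max_left n m),
        hmono (le_max_right n m)⟩
    have l1 := A.T_oc (Set.range fun n : ℕ => f ⊓ n • A.e) f ⟨f ⊓ (0:ℕ) • A.e, ⟨0, rfl⟩⟩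
      (hdir f) h1
    have l2 := A.T_oc (Set.range fun n : ℕ => A.S f ⊓ n • A.e) (A.S f)
      ⟨A.S f ⊓ (0:ℕ) • A.e, ⟨0, rfl⟩⟩ (hdir (A.S f)) h2
    have himg : A.T '' (Set.range fun n : ℕ => A.S f ⊓ n • A.e)
        = A.T '' (Set.range fun n : ℕ => f ⊓ n • A.e) := by
      rw [← Set.range_comp, ← Set.range_comp]
      refine congrArg Set.range (funext fun n : ℕ => ?_)
      show A.T (A.S f ⊓ n • A.e) = A.T (f ⊓ n • A.e)
      have hSn : A.S f ⊓ n • A.e = A.S (f ⊓ n • A.e) := by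
        rw [S_inf' A, map_nsmul, A.S_e]
      rw [hSn]
      exact TS_eq_T_of_le_nsmul A h (le_inf hf (nsmul_nonneg he n)) inf_le_right
    rw [himg] at l2
    exact l2.unique l1
  intro f
  have hdec : f = (f ⊔ 0) - ((-f) ⊔ 0) := by
    have h1 : f ⊓ 0 + (f ⊔ 0) = f + 0 := inf_add_sup f 0
    have h2 : (-f) ⊔ 0 = -(f ⊓ 0) := by rw [neg_inf, neg_zero]
    rw [h2, sub_neg_eq_add, add_comm, h1, add_zero]
  calc A.T (A.S f) = A.T (A.S ((f ⊔ 0) - ((-f) ⊔ 0))) := by rw [← hdec]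
    _ = A.T (A.S (f ⊔ 0)) - A.T (A.S ((-f) ⊔ 0)) := by rw [map_sub, map_sub]
    _ = A.T (f ⊔ 0) - A.T ((-f) ⊔ 0) := by
        rw [key _ le_sup_right, key _ le_sup_right]
    _ = A.T ((f ⊔ 0) - ((-f) ⊔ 0)) := (map_sub _ _ _).symm
    _ = A.T f := by rw [← hdec]

/-- if `T S p = T p` holds for all components `p` of `e`, then
`T S f = T f` for all `f ∈ E`. -/
theorem TS_eq_T_of_components
    {E : Type*} [ConditionallyCompleteLattice E] [AddCommGroup E] [Module ℝ E]
    [CovariantClass E E (· + ·) (· ≤ ·)]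
    (A : PreCEPS E)
    (h : ∀ p : E, IsComponent A.e p → A.T (A.S p) = A.T p) :
    ∀ f : E, A.T (A.S f) = A.T f :=
  TS_eq_T_of_components_aux A h
end
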